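/- arXiv:1908.00933 — 5 statements merged into one kernel-verified Lean document; each statement's English description precedes it below -/
import Mathlib

section
/- (Duality formula) For every Borel set E ⊆ ℙ^n, 1/√(γ(E)) = sup{ ν(E) : ν a positive Borel measure on ℙ^n with supp ν ⊆ E and I(ν,ν) ≤ 1 }, where 1/√(+∞) := 0 and γ(E) = −log κ(E). In particular, E is κ-polar if and only if ν(E) = 0 for every positive Borel measure ν on ℙ^n with I(ν,ν) < +∞ and supp ν ⊆ E. -/
open MeasureTheory Filter Topology ENNReal

noncomputable section

/-- Complex projective space ℙⁿ, the projectivization of ℂ^{n+1}. -/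
abbrev Pn (n : ℕ) : Type := Projectivization ℂ (EuclideanSpace ℂ (Fin (n + 1)))

instance (n : ℕ) : TopologicalSpace (Pn n) := instTopologicalSpaceQuotient
instance (n : ℕ) : MeasurableSpace (Pn n) := borel _
instance (n : ℕ) : BorelSpace (Pn n) := ⟨rfl⟩

variable {n : ℕ}

/-- The quantity |ζ∧η| / (|ζ||η|) ∈ [0,1], computed on (arbitrary) representatives,
where |ζ∧η|² = |ζ|²|η|² − |⟨ζ,η⟩|². -/
def pratio (x y : Pn n) : ℝ :=
  Real.sqrt (‖x.rep‖ ^ 2 * ‖y.rep‖ ^ 2 - ‖(inner ℂ x.rep y.rep : ℂ)‖ ^ 2) /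
    (‖x.rep‖ * ‖y.rep‖)

/-- −G(ζ,η) ∈ [0,+∞], where G(ζ,η) = log (|ζ∧η| / (|ζ||η|)) is the projective
logarithmic kernel. -/
def negG (x y : Pn n) : ℝ≥0∞ :=
  if pratio x y = 0 then ∞ else ENNReal.ofReal (-Real.log (pratio x y))

/-- The projective logarithmic potential G_μ(ζ) = ∫ G(ζ,η) dμ(η) ∈ [−∞,0]. -/
def potential (μ : Measure (Pn n)) (x : Pn n) : EReal :=
  -((∫⁻ y, negG x y ∂μ : ℝ≥0∞) : EReal)

/-- The mutual projective logarithmic energy I(μ,ν) = −∬ G(ζ,η) dμ(η) dν(ζ) ∈ [0,+∞]. -/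
def mutEnergy (μ ν : Measure (Pn n)) : ℝ≥0∞ :=
  ∫⁻ x, ∫⁻ y, negG x y ∂μ ∂ν

/-- The projective logarithmic energy I(μ) = −∬ G(ζ,η) dμ(η) dμ(ζ) ∈ [0,+∞]. -/
def energy (μ : Measure (Pn n)) : ℝ≥0∞ := mutEnergy μ μ

/-- The (closed) support of a Borel measure. -/
def msupport (μ : Measure (Pn n)) : Set (Pn n) :=
  {x | ∀ U : Set (Pn n), IsOpen U → x ∈ U → μ U ≠ 0}

/-- The Robin constant γ(E) = inf { I(μ) : μ probability measure, supp μ ⊆ E }. -/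
def robin (E : Set (Pn n)) : ℝ≥0∞ :=
  ⨅ (μ : Measure (Pn n)) (_ : IsProbabilityMeasure μ) (_ : msupport μ ⊆ E), energy μ

/-- The projective logarithmic capacity κ(E) = e^{−γ(E)}. -/
def kappa (E : Set (Pn n)) : ℝ≥0∞ := EReal.exp (-(robin E : EReal))

/-- A set is κ-polar if every probability measure supported in it has infinite energy. -/
def IsPolar (E : Set (Pn n)) : Prop :=
  ∀ μ : Measure (Pn n), IsProbabilityMeasure μ → msupport μ ⊆ E → energy μ = ∞

/-- Weak convergence of a sequence of measures: convergence of the integrals of all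
continuous real functions. -/
def WeakTendsto (μs : ℕ → Measure (Pn n)) (μ : Measure (Pn n)) : Prop :=
  ∀ f : C(Pn n, ℝ), Tendsto (fun j => ∫ x, f x ∂(μs j)) atTop (𝓝 (∫ x, f x ∂μ))

/-- The Fubini–Study geodesic distance, determined by sin (d(ζ,η)/√2) = |ζ∧η|/(|ζ||η|). -/
def gd (x y : Pn n) : ℝ := Real.sqrt 2 * Real.arcsin (pratio x y)


namespace PnAux
open Projectivization ComplexConjugate

variable {n : ℕ}

abbrev Vn (n : ℕ) := EuclideanSpace ℂ (Fin (n + 1))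

def praux (v w : Vn n) : ℝ :=
  Real.sqrt (‖v‖ ^ 2 * ‖w‖ ^ 2 - ‖(inner ℂ v w : ℂ)‖ ^ 2) / (‖v‖ * ‖w‖)

lemma pratio_def (x y : Pn n) : pratio x y = praux x.rep y.rep := rfl

lemma praux_comm (v w : Vn n) : praux v w = praux w v := by
  unfold praux
  rw [← norm_inner_symm v w, mul_comm ‖v‖, mul_comm (‖v‖ ^ 2)]

lemma praux_smul_left (c : ℂ) (hc : c ≠ 0) (v w : Vn n) :
    praux (c • v) w = praux v w := by
  unfold praux
  rw [norm_smul, inner_smul_left, norm_mul, RCLike.norm_conj]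
  have hc' : (0:ℝ) < ‖c‖ := norm_pos_iff.2 hc
  rw [show (‖c‖ * ‖v‖) ^ 2 * ‖w‖ ^ 2 - (‖c‖ * ‖(inner ℂ v w : ℂ)‖) ^ 2
      = ‖c‖ ^ 2 * (‖v‖ ^ 2 * ‖w‖ ^ 2 - ‖(inner ℂ v w : ℂ)‖ ^ 2) by ring]
  rw [Real.sqrt_mul (sq_nonneg _), Real.sqrt_sq hc'.le, mul_assoc ‖c‖,
    mul_div_mul_left _ _ hc'.ne']

lemma praux_smul_right (c : ℂ) (hc : c ≠ 0) (v w : Vn n) :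
    praux v (c • w) = praux v w := by
  rw [praux_comm, praux_smul_left c hc, praux_comm]

lemma pratio_mk (v w : Vn n) (hv : v ≠ 0) (hw : w ≠ 0) :
    pratio (Projectivization.mk ℂ v hv) (Projectivization.mk ℂ w hw) = praux v w := by
  rw [pratio_def]
  obtain ⟨a, ha⟩ := (mk_eq_mk_iff ℂ _ _ (rep_nonzero _) hv).1 (mk_rep (Projectivization.mk ℂ v hv))
  obtain ⟨b, hb⟩ := (mk_eq_mk_iff ℂ _ _ (rep_nonzero _) hw).1 (mk_rep (Projectivization.mk ℂ w hw))
  rw [← ha, ← hb, Units.smul_def, Units.smul_def,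
    praux_smul_left _ a.ne_zero, praux_smul_right _ b.ne_zero]

lemma pratio_nonneg (x y : Pn n) : 0 ≤ pratio x y :=
  div_nonneg (Real.sqrt_nonneg _) (mul_nonneg (norm_nonneg _) (norm_nonneg _))

end PnAux
namespace PnAux
open Projectivization ComplexConjugate

variable {n : ℕ}

abbrev En (n : ℕ) := EuclideanSpace ℂ ((Fin (n + 1)) × (Fin (n + 1)))

/-- rank-one projection matrix associated to a vector -/
def MM (u : Vn n) : En n := (WithLp.equiv 2 _).symm (fun p => u p.1 * conj (u p.2))

lemma inner_MM (u v : Vn n) :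
    (inner ℂ (MM u) (MM v) : ℂ) = (inner ℂ u v : ℂ) * conj (inner ℂ u v : ℂ) := by
  simp only [MM, PiLp.inner_apply, RCLike.inner_apply, WithLp.equiv_symm_apply, PiLp.toLp_apply]
  rw [Fintype.sum_prod_type, map_sum, Finset.sum_mul_sum]
  refine Finset.sum_congr rfl fun i _ => Finset.sum_congr rfl fun j _ => ?_
  simp only [map_mul, RingHomCompTriple.comp_apply, Complex.conj_conj]
  ring

lemma norm_MM_sub_sq (u v : Vn n) (hu : ‖u‖ = 1) (hv : ‖v‖ = 1) :
    ‖MM u - MM v‖ ^ 2 = 2 * (1 - ‖(inner ℂ u v : ℂ)‖ ^ 2) := by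
  have h := @norm_sub_sq ℂ _ _ _ _ (MM u) (MM v)
  have h1 : ‖MM u‖ ^ 2 = 1 := by
    rw [← inner_self_eq_norm_sq (𝕜 := ℂ), inner_MM, inner_self_eq_norm_sq_to_K, hu]
    norm_num
  have h2 : ‖MM v‖ ^ 2 = 1 := by
    rw [← inner_self_eq_norm_sq (𝕜 := ℂ), inner_MM, inner_self_eq_norm_sq_to_K, hv]
    norm_num
  have h3 : RCLike.re (inner ℂ (MM u) (MM v) : ℂ) = ‖(inner ℂ u v : ℂ)‖ ^ 2 := by
    rw [inner_MM, Complex.mul_conj]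
    simp only [Complex.normSq_eq_norm_sq, RCLike.re, PiLp.inner_apply,
      RCLike.inner_apply, MonoidHom.coe_mk, OneHom.coe_mk]
    exact Complex.ofReal_re _
  rw [h1, h2, h3] at h
  rw [h]; ring

end PnAux
namespace PnAux
open Projectivization ComplexConjugate

variable {n : ℕ}

def nrep (x : Pn n) : Vn n := ((‖x.rep‖ : ℂ)⁻¹) • x.rep

lemma nrep_coeff_ne (x : Pn n) : ((‖x.rep‖ : ℂ))⁻¹ ≠ 0 := by
  simp [Complex.ofReal_eq_zero, norm_eq_zero, x.rep_nonzero]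

lemma norm_nrep (x : Pn n) : ‖nrep x‖ = 1 := by
  have h0 : ‖x.rep‖ ≠ 0 := norm_ne_zero_iff.2 x.rep_nonzero
  rw [nrep, norm_smul, norm_inv, Complex.norm_real, norm_norm,
    inv_mul_cancel₀ h0]

lemma pratio_eq_nrep (x y : Pn n) : pratio x y = praux (nrep x) (nrep y) := by
  rw [pratio_def, nrep, nrep, praux_smul_left _ (nrep_coeff_ne x),
    praux_smul_right _ (nrep_coeff_ne y)]

lemma pratio_eq_sqrt (x y : Pn n) :
    pratio x y = Real.sqrt (1 - ‖(inner ℂ (nrep x) (nrep y) : ℂ)‖ ^ 2) := by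
  rw [pratio_eq_nrep]
  unfold praux
  rw [norm_nrep, norm_nrep]
  norm_num

lemma pratio_symm (x y : Pn n) : pratio x y = pratio y x := by
  rw [pratio_def, pratio_def, praux_comm]

lemma norm_MM_nrep_sub (x y : Pn n) :
    ‖MM (nrep x) - MM (nrep y)‖ = Real.sqrt 2 * pratio x y := by
  have key := norm_MM_sub_sq (nrep x) (nrep y) (norm_nrep x) (norm_nrep y)
  rw [pratio_eq_sqrt, ← Real.sqrt_sq (norm_nonneg (MM (nrep x) - MM (nrep y))), key,
    Real.sqrt_mul (by norm_num : (0:ℝ) ≤ 2)]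

lemma pratio_triangle (x y z : Pn n) : pratio x z ≤ pratio x y + pratio y z := by
  have h : ‖MM (nrep x) - MM (nrep z)‖ ≤
      ‖MM (nrep x) - MM (nrep y)‖ + ‖MM (nrep y) - MM (nrep z)‖ :=
    norm_sub_le_norm_sub_add_norm_sub _ _ _
  rw [norm_MM_nrep_sub, norm_MM_nrep_sub, norm_MM_nrep_sub] at h
  have h2 : (0:ℝ) < Real.sqrt 2 := by positivity
  nlinarith [h2]

end PnAux
namespace PnAux
open Projectivization ComplexConjugate

variable {n : ℕ}

def qmk (v : { v : Vn n // v ≠ 0 }) : Pn n := Projectivization.mk ℂ v.1 v.2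

lemma isQuotientMap_qmk : IsQuotientMap (qmk (n := n)) :=
  isQuotientMap_quot_mk

lemma pratio_qmk_left (v : { v : Vn n // v ≠ 0 }) (w : Pn n) :
    pratio (qmk v) w = praux v.1 w.rep := by
  conv_lhs => rw [qmk, ← mk_rep w]
  exact pratio_mk v.1 w.rep v.2 w.rep_nonzero

lemma continuous_praux_left (w : Vn n) (hw : w ≠ 0) :
    Continuous (fun v : { v : Vn n // v ≠ 0 } => praux v.1 w) := by
  unfold praux
  have hval : Continuous (fun v : { v : Vn n // v ≠ 0 } => (v : Vn n)) :=
    continuous_subtype_val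
  have h1 : Continuous (fun v : { v : Vn n // v ≠ 0 } =>
      Real.sqrt (‖(v : Vn n)‖ ^ 2 * ‖w‖ ^ 2 - ‖(inner ℂ (v : Vn n) w : ℂ)‖ ^ 2)) := by
    apply Real.continuous_sqrt.comp
    apply Continuous.sub
    · exact (((hval.norm.pow 2).mul continuous_const))
    · exact ((Continuous.inner hval continuous_const).norm.pow 2)
  apply h1.div ((hval.norm).mul continuous_const)
  intro v
  exact mul_ne_zero (norm_ne_zero_iff.2 v.2) (norm_ne_zero_iff.2 hw)

lemma isOpen_pratio_lt (w : Pn n) (c : ℝ) : IsOpen {x : Pn n | pratio x w < c} := by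
  rw [← isQuotientMap_qmk.isOpen_preimage]
  have : (qmk ⁻¹' {x : Pn n | pratio x w < c})
      = (fun v : { v : Vn n // v ≠ 0 } => praux v.1 w.rep) ⁻¹' (Set.Iio c) := by
    ext v
    simp [pratio_qmk_left]
  rw [this]
  exact (continuous_praux_left w.rep w.rep_nonzero).isOpen_preimage _ isOpen_Iio

end PnAux
namespace PnAux
open Projectivization ComplexConjugate

variable {n : ℕ}

/-- scalar action on nonzero vectors -/
def sm (a : ℂˣ) (v : { v : Vn n // v ≠ 0 }) : { v : Vn n // v ≠ 0 } :=
  ⟨(a : ℂ) • v.1, smul_ne_zero a.ne_zero v.2⟩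

lemma continuous_sm (a : ℂˣ) : Continuous (sm (n := n) a) := by
  apply Continuous.subtype_mk
  exact (continuous_const (y := (a : ℂ))).smul (continuous_subtype_val (p := fun v : Vn n => v ≠ 0))

lemma sm_sm (a : ℂˣ) (v : { v : Vn n // v ≠ 0 }) : sm a⁻¹ (sm a v) = v := by
  apply Subtype.ext
  show (a⁻¹ : ℂˣ) • ((a : ℂˣ) • v.1) = v.1
  rw [smul_smul, inv_mul_cancel, one_smul]

lemma sm_sm' (a : ℂˣ) (v : { v : Vn n // v ≠ 0 }) : sm a (sm a⁻¹ v) = v := by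
  have := sm_sm a⁻¹ v
  rwa [inv_inv] at this

lemma isOpenMap_qmk : IsOpenMap (qmk (n := n)) := by
  intro U hU
  rw [← isQuotientMap_qmk.isOpen_preimage]
  have key : qmk ⁻¹' (qmk '' U) = ⋃ (a : ℂˣ), sm a '' U := by
    ext v
    constructor
    · rintro ⟨u, hu, huv⟩
      obtain ⟨a, ha⟩ := (mk_eq_mk_iff ℂ u.1 v.1 u.2 v.2).1 huv
      refine Set.mem_iUnion.2 ⟨a⁻¹, u, hu, ?_⟩
      apply Subtype.ext
      show ((a⁻¹ : ℂˣ) : ℂ) • u.1 = v.1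
      have : (a : ℂ) • v.1 = u.1 := ha
      rw [← this, smul_smul]
      simp
    · intro hv
      obtain ⟨a, u, hu, huv⟩ := Set.mem_iUnion.1 hv
      refine ⟨u, hu, ?_⟩
      apply (mk_eq_mk_iff ℂ u.1 v.1 u.2 v.2).2
      exact ⟨a⁻¹, by rw [← huv]; exact congrArg Subtype.val (sm_sm a u)⟩
  rw [key]
  apply isOpen_iUnion
  intro a
  rw [show sm a '' U = sm a⁻¹ ⁻¹' U from
    congrFun (Set.image_eq_preimage_of_inverse (sm_sm a) (sm_sm' a)) U]
  exact hU.preimage (continuous_sm a⁻¹)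

instance : SecondCountableTopology (Pn n) :=
  TopologicalSpace.Quotient.secondCountableTopology (S := projectivizationSetoid ℂ (Vn n)) isOpenMap_qmk

end PnAux
namespace PnAux
open Projectivization Set MeasureTheory

variable {n : ℕ}

lemma compl_msupport_eq (μ : Measure (Pn n)) :
    (msupport μ)ᶜ = ⋃₀ {U : Set (Pn n) | IsOpen U ∧ μ U = 0} := by
  ext x
  simp only [msupport, mem_compl_iff, mem_setOf_eq, mem_sUnion]
  push_neg
  constructor
  · rintro ⟨U, hU, hxU, hμU⟩; exact ⟨U, ⟨hU, hμU⟩, hxU⟩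
  · rintro ⟨U, ⟨hU, hμU⟩, hxU⟩; exact ⟨U, hU, hxU, hμU⟩

lemma measure_compl_msupport (μ : Measure (Pn n)) : μ (msupport μ)ᶜ = 0 := by
  rw [compl_msupport_eq]
  obtain ⟨T, hTc, hTS, hT⟩ := TopologicalSpace.isOpen_sUnion_countable
    {U : Set (Pn n) | IsOpen U ∧ μ U = 0} (fun s hs => hs.1)
  rw [← hT]
  exact (measure_sUnion_null_iff hTc).2 fun s hs => (hTS hs).2

lemma measure_compl_eq_zero (μ : Measure (Pn n)) {E : Set (Pn n)} (h : msupport μ ⊆ E) :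
    μ Eᶜ = 0 :=
  measure_mono_null (compl_subset_compl.2 h) (measure_compl_msupport μ)

lemma prob_measure_eq_one (μ : Measure (Pn n)) [IsProbabilityMeasure μ] {E : Set (Pn n)}
    (hE : MeasurableSet E) (h : msupport μ ⊆ E) : μ E = 1 := by
  have h1 := measure_add_measure_compl (μ := μ) hE
  rw [measure_compl_eq_zero μ h, add_zero, measure_univ] at h1
  exact h1

lemma norm_MM_nrep (x : Pn n) : ‖MM (nrep x)‖ = 1 := by
  have : ‖MM (nrep x)‖ ^ 2 = 1 := by
    rw [← inner_self_eq_norm_sq (𝕜 := ℂ), inner_MM, inner_self_eq_norm_sq_to_K, norm_nrep]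
    norm_num
  nlinarith [norm_nonneg (MM (nrep x))]

lemma exists_cover : ∃ F : Set (Pn n), F.Finite ∧ ∀ x : Pn n, ∃ w ∈ F, pratio x w < 1/4 := by
  have hK : Set.range (fun x : Pn n => MM (nrep x)) ⊆ Metric.closedBall 0 2 := by
    rintro - ⟨x, rfl⟩
    rw [Metric.mem_closedBall, dist_zero_right, norm_MM_nrep x]
    norm_num
  have htb : TotallyBounded (Set.range (fun x : Pn n => MM (nrep x))) :=
    (IsCompact.totallyBounded (isCompact_closedBall 0 2)).subset hK
  have hε : (0:ℝ≥0∞) < ENNReal.ofReal (Real.sqrt 2 / 8) := by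
    rw [ENNReal.ofReal_pos]; positivity
  obtain ⟨t, hts, htf, hcov⟩ := (EMetric.totallyBounded_iff'.1 htb) _ hε
  choose! g hg using fun y (hy : y ∈ t) => hts hy
  refine ⟨g '' t, htf.image g, fun x => ?_⟩
  have hx : MM (nrep x) ∈ ⋃ y ∈ t, Metric.eball y (ENNReal.ofReal (Real.sqrt 2 / 8)) :=
    hcov (Set.mem_range_self x)
  obtain ⟨y, hyt, hxy⟩ := Set.mem_iUnion₂.1 hx
  refine ⟨g y, Set.mem_image_of_mem g hyt, ?_⟩
  have h1 : ‖MM (nrep x) - MM (nrep (g y))‖ < Real.sqrt 2 / 8 := by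
    rw [show MM (nrep (g y)) = y from hg y hyt]
    rw [Metric.mem_eball] at hxy
    rw [← dist_eq_norm]
    exact edist_lt_ofReal.1 hxy
  rw [norm_MM_nrep_sub] at h1
  have h2 : (0:ℝ) < Real.sqrt 2 := by positivity
  nlinarith [pratio_nonneg x (g y)]

lemma negG_ge_of_pratio_le {x y : Pn n} (h : pratio x y ≤ 1/2) :
    ENNReal.ofReal (Real.log 2) ≤ negG x y := by
  unfold negG
  by_cases h0 : pratio x y = 0
  · simp [h0]
  · rw [if_neg h0]
    apply ENNReal.ofReal_le_ofReal
    have hp : 0 < pratio x y := lt_of_le_of_ne (pratio_nonneg x y) (Ne.symm h0)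
    have := Real.log_le_log hp h
    rw [show (1/2 : ℝ) = 2⁻¹ by norm_num, Real.log_inv] at this
    linarith

lemma energy_eq_top_of_infinite_mass (ν : Measure (Pn n)) (hν : ν Set.univ = ∞) :
    energy ν = ∞ := by
  obtain ⟨F, hFfin, hFcov⟩ := exists_cover (n := n)
  -- some piece has infinite measure
  have hexists : ∃ w ∈ F, ν {x : Pn n | pratio x w < 1/4} = ∞ := by
    by_contra hcon
    push_neg at hcon
    have hsub : (Set.univ : Set (Pn n)) ⊆
        ⋃ w ∈ hFfin.toFinset, {x : Pn n | pratio x w < 1/4} := by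
      intro x _
      obtain ⟨w, hw, hpw⟩ := hFcov x
      exact Set.mem_biUnion (hFfin.mem_toFinset.2 hw) hpw
    have hle := (measure_mono hsub).trans (measure_biUnion_finset_le (μ := ν) hFfin.toFinset
      (fun w => {x : Pn n | pratio x w < 1/4}))
    rw [hν] at hle
    have hlt : ∑ w ∈ hFfin.toFinset, ν {x : Pn n | pratio x w < 1/4} < ∞ :=
      ENNReal.sum_lt_top.2 fun w hw =>
        (hcon w (hFfin.mem_toFinset.1 hw)).lt_top
    exact absurd (lt_of_le_of_lt hle hlt) (lt_irrefl ⊤)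
  obtain ⟨w, hwF, hwB⟩ := hexists
  set B := {x : Pn n | pratio x w < 1/4} with hBdef
  have hBopen : IsOpen B := isOpen_pratio_lt w _
  have hBmeas : MeasurableSet B := hBopen.measurableSet
  set c := ENNReal.ofReal (Real.log 2) with hc
  have hc0 : c ≠ 0 := by
    simp [hc, ENNReal.ofReal_eq_zero, not_le]
    positivity
  have hpair : ∀ x ∈ B, ∀ y ∈ B, c ≤ negG x y := by
    intro x hx y hy
    apply negG_ge_of_pratio_le
    have h1 : pratio x y ≤ pratio x w + pratio w y := pratio_triangle x w y
    have h2 : pratio w y = pratio y w := pratio_symm w y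
    have hx' : pratio x w < 1/4 := hx
    have hy' : pratio y w < 1/4 := hy
    linarith
  have hinner : ∀ x ∈ B, c * ν B ≤ ∫⁻ y, negG x y ∂ν := by
    intro x hx
    calc c * ν B = ∫⁻ y, B.indicator (fun _ => c) y ∂ν := by
          rw [lintegral_indicator_const hBmeas]
      _ ≤ ∫⁻ y, negG x y ∂ν := by
          apply lintegral_mono
          intro y
          by_cases hy : y ∈ B
          · rw [Set.indicator_of_mem hy]; exact hpair x hx y hy
          · rw [Set.indicator_of_notMem hy]; exact zero_le
  have houter : (c * ν B) * ν B ≤ energy ν := by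
    calc (c * ν B) * ν B = ∫⁻ x, B.indicator (fun _ => c * ν B) x ∂ν := by
          rw [lintegral_indicator_const hBmeas]
      _ ≤ ∫⁻ x, ∫⁻ y, negG x y ∂ν ∂ν := by
          apply lintegral_mono
          intro x
          by_cases hx : x ∈ B
          · rw [Set.indicator_of_mem hx]; exact hinner x hx
          · rw [Set.indicator_of_notMem hx]; exact zero_le
      _ = energy ν := rfl
  rw [hwB] at houter
  rw [ENNReal.mul_top hc0, ENNReal.top_mul (by simp)] at houter
  exact top_le_iff.1 houter

end PnAux
namespace PnAux
open MeasureTheory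

variable {n : ℕ}

lemma msupport_smul (c : ℝ≥0∞) (hc : c ≠ 0) (μ : Measure (Pn n)) :
    msupport (c • μ) = msupport μ := by
  ext x
  simp only [msupport, Set.mem_setOf_eq, Measure.smul_apply, smul_eq_mul]
  constructor
  · intro h U hU hx h0
    exact h U hU hx (by rw [h0, mul_zero])
  · intro h U hU hx h0
    rcases mul_eq_zero.1 h0 with h1 | h1
    · exact hc h1
    · exact h U hU hx h1

lemma energy_smul (c : ℝ≥0∞) (hc : c ≠ ∞) (μ : Measure (Pn n)) :
    energy (c • μ) = c * c * energy μ := by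
  unfold energy mutEnergy
  simp only [lintegral_smul_measure, smul_eq_mul]
  rw [lintegral_const_mul' c _ hc]
  ring

lemma rpow_neg_half_antitone {a b : ℝ≥0∞} (hab : a ≤ b) :
    b ^ (-(1/2 : ℝ)) ≤ a ^ (-(1/2 : ℝ)) := by
  rw [ENNReal.rpow_neg, ENNReal.rpow_neg]
  exact ENNReal.inv_le_inv.2 (ENNReal.rpow_le_rpow hab (by norm_num))

lemma robin_rpow (E : Set (Pn n)) :
    robin E ^ (-(1/2 : ℝ)) =
      ⨆ (μ : Measure (Pn n)) (_ : IsProbabilityMeasure μ) (_ : msupport μ ⊆ E),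
        energy μ ^ (-(1/2 : ℝ)) := by
  have h2 : (0:ℝ) < 1/2 := by norm_num
  have key : ∀ x : ℝ≥0∞, x ^ (-(1/2:ℝ)) = (ENNReal.orderIsoRpow (1/2) h2 x)⁻¹ := fun x => by
    rw [ENNReal.orderIsoRpow_apply, ← ENNReal.rpow_neg]
  simp_rw [key]
  rw [robin]
  simp_rw [OrderIso.map_iInf, ENNReal.inv_iInf]

end PnAux

theorem statement6 (n : ℕ) (E : Set (Pn n)) (hE : MeasurableSet E) :
    (robin E ^ (-(1 / 2 : ℝ)) =
      ⨆ (ν : Measure (Pn n)) (_ : msupport ν ⊆ E) (_ : mutEnergy ν ν ≤ 1), ν E) ∧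
    (IsPolar E ↔
      ∀ ν : Measure (Pn n), mutEnergy ν ν ≠ ∞ → msupport ν ⊆ E → ν E = 0) := by
  constructor
  · apply le_antisymm
    · -- robin E ^ (-(1/2)) ≤ sup
      rw [PnAux.robin_rpow]
      refine iSup_le fun μ => iSup_le fun hμ => iSup_le fun hsupp => ?_
      have hμE : μ E = 1 := PnAux.prob_measure_eq_one μ hE hsupp
      rcases eq_or_ne (energy μ) ∞ with hetop | hetop
      · rw [hetop, ENNReal.top_rpow_of_neg (by norm_num)]
        exact zero_le
      rcases eq_or_ne (energy μ) 0 with he0 | he0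
      · rw [he0, ENNReal.zero_rpow_of_neg (by norm_num)]
        by_contra hcon
        push_neg at hcon
        have hS : (⨆ (ν : Measure (Pn n)) (_ : msupport ν ⊆ E) (_ : mutEnergy ν ν ≤ 1), ν E) ≠ ∞ :=
          hcon.ne_top
        obtain ⟨k, hk⟩ := ENNReal.exists_nat_gt hS
        have hcomp : ((k : ℝ≥0∞)) ≤
            ⨆ (ν : Measure (Pn n)) (_ : msupport ν ⊆ E) (_ : mutEnergy ν ν ≤ 1), ν E := by
          set ν := ((k : ℝ≥0∞) + 1) • μ with hν
          have hc0 : ((k : ℝ≥0∞) + 1) ≠ 0 := by simp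
          have hctop : ((k : ℝ≥0∞) + 1) ≠ ∞ := by simp
          have h1 : msupport ν ⊆ E := by
            rw [hν, PnAux.msupport_smul _ hc0]
            exact hsupp
          have h2 : mutEnergy ν ν ≤ 1 := by
            have : energy ν = ((k : ℝ≥0∞) + 1) * ((k : ℝ≥0∞) + 1) * energy μ :=
              PnAux.energy_smul _ hctop μ
            rw [he0, mul_zero] at this
            rw [show mutEnergy ν ν = energy ν from rfl, this]
            exact zero_le
          have h3 : (k : ℝ≥0∞) ≤ ν E := by
            rw [hν, Measure.smul_apply, smul_eq_mul, hμE, mul_one]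
            exact le_self_add
          refine h3.trans ?_
          refine le_trans (le_iSup (fun _ : mutEnergy ν ν ≤ 1 => ν E) h2) ?_
          refine le_trans (le_iSup (fun _ : msupport ν ⊆ E =>
            ⨆ (_ : mutEnergy ν ν ≤ 1), ν E) h1) ?_
          exact le_iSup (fun ν' : Measure (Pn n) => ⨆ (_ : msupport ν' ⊆ E)
            (_ : mutEnergy ν' ν' ≤ 1), ν' E) ν
        exact absurd (lt_of_le_of_lt hcomp hk) (lt_irrefl _)
      · -- 0 < energy μ < ∞
        set k := energy μ ^ (-(1/2 : ℝ)) with hk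
        have hk0 : k ≠ 0 := by
          rw [hk]
          simp [ENNReal.rpow_eq_zero_iff, he0, hetop]
        have hktop : k ≠ ∞ := by
          rw [hk]
          simp [ENNReal.rpow_eq_top_iff, he0, hetop]
        set ν := k • μ with hν
        have h1 : msupport ν ⊆ E := by
          rw [hν, PnAux.msupport_smul _ hk0]
          exact hsupp
        have h2 : mutEnergy ν ν ≤ 1 := by
          have heq : energy ν = k * k * energy μ := PnAux.energy_smul _ hktop μ
          have hkk : k * k = (energy μ)⁻¹ := by
            rw [hk, ← ENNReal.rpow_add _ _ he0 hetop, ← ENNReal.rpow_neg_one]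
            norm_num
          rw [show mutEnergy ν ν = energy ν from rfl, heq, hkk,
            ENNReal.inv_mul_cancel he0 hetop]
        have h3 : ν E = k := by
          rw [hν, Measure.smul_apply, smul_eq_mul, hμE, mul_one]
        rw [← h3]
        refine le_trans (le_iSup (fun _ : mutEnergy ν ν ≤ 1 => ν E) h2) ?_
        refine le_trans (le_iSup (fun _ : msupport ν ⊆ E =>
          ⨆ (_ : mutEnergy ν ν ≤ 1), ν E) h1) ?_
        exact le_iSup (fun ν' : Measure (Pn n) => ⨆ (_ : msupport ν' ⊆ E)
          (_ : mutEnergy ν' ν' ≤ 1), ν' E) ν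
    · -- sup ≤ robin E ^ (-(1/2))
      refine iSup_le fun ν => iSup_le fun hsupp => iSup_le fun hen => ?_
      rcases eq_or_ne (ν Set.univ) 0 with hm0 | hm0
      · have : ν E = 0 := le_antisymm (hm0 ▸ measure_mono (Set.subset_univ E)) zero_le
        rw [this]
        exact zero_le
      rcases eq_or_ne (ν Set.univ) ∞ with hmtop | hmtop
      · exfalso
        have := PnAux.energy_eq_top_of_infinite_mass ν hmtop
        rw [show mutEnergy ν ν = energy ν from rfl, this] at hen
        exact absurd (lt_of_le_of_lt hen (by norm_num)) (lt_irrefl _)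
      · set m := ν Set.univ with hm
        have hi0 : m⁻¹ ≠ 0 := ENNReal.inv_ne_zero.2 hmtop
        have hitop : m⁻¹ ≠ ∞ := ENNReal.inv_ne_top.2 hm0
        set μ := m⁻¹ • ν with hμ
        have hprob : IsProbabilityMeasure μ := ⟨by
          rw [hμ, Measure.smul_apply, smul_eq_mul, ← hm, ENNReal.inv_mul_cancel hm0 hmtop]⟩
        have hsupp' : msupport μ ⊆ E := by
          rw [hμ, PnAux.msupport_smul _ hi0]
          exact hsupp
        have hγ : robin E ≤ m⁻¹ * m⁻¹ := by
          have h1 : robin E ≤ energy μ := by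
            refine le_trans (iInf_le _ μ) ?_
            refine le_trans (iInf_le _ hprob) ?_
            exact iInf_le _ hsupp'
          have h2 : energy μ = m⁻¹ * m⁻¹ * energy ν := PnAux.energy_smul _ hitop ν
          refine h1.trans ?_
          rw [h2]
          calc m⁻¹ * m⁻¹ * energy ν ≤ m⁻¹ * m⁻¹ * 1 := by
                exact mul_le_mul' le_rfl hen
            _ = m⁻¹ * m⁻¹ := by rw [mul_one]
        have hmono := PnAux.rpow_neg_half_antitone hγ
        have hcomp : (m⁻¹ * m⁻¹) ^ (-(1/2 : ℝ)) = m := by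
          rw [show m⁻¹ * m⁻¹ = m⁻¹ ^ (2 : ℕ) from (sq m⁻¹).symm,
            ← ENNReal.rpow_natCast, ← ENNReal.rpow_mul]
          norm_num
          rw [ENNReal.rpow_neg_one, inv_inv]
        rw [hcomp] at hmono
        exact (measure_mono (Set.subset_univ E)).trans hmono
  · constructor
    · intro hpolar ν hfin hsupp
      by_contra hνE
      have hm0 : ν Set.univ ≠ 0 := by
        intro h
        exact hνE (le_antisymm (h ▸ measure_mono (Set.subset_univ E)) zero_le)
      have hmtop : ν Set.univ ≠ ∞ := by
        intro h
        exact hfin (PnAux.energy_eq_top_of_infinite_mass ν h)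
      have hi0 : (ν Set.univ)⁻¹ ≠ 0 := ENNReal.inv_ne_zero.2 hmtop
      have hitop : (ν Set.univ)⁻¹ ≠ ∞ := ENNReal.inv_ne_top.2 hm0
      set μ := (ν Set.univ)⁻¹ • ν with hμ
      have hprob : IsProbabilityMeasure μ := ⟨by
        rw [hμ, Measure.smul_apply, smul_eq_mul, ENNReal.inv_mul_cancel hm0 hmtop]⟩
      have hsupp' : msupport μ ⊆ E := by
        rw [hμ, PnAux.msupport_smul _ hi0]
        exact hsupp
      have htop := hpolar μ hprob hsupp'
      rw [hμ, PnAux.energy_smul _ hitop ν] at htop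
      exact absurd htop (ENNReal.mul_ne_top (ENNReal.mul_ne_top hitop hitop) hfin)
    · intro h μ hprob hsupp
      by_contra hfin
      have hzero := h μ hfin hsupp
      rw [PnAux.prob_measure_eq_one μ hE hsupp] at hzero
      exact one_ne_zero hzero

end
end

section
/- Let μ be a probability measure on ℙ^n with I(μ) < +∞, and let E := { ζ ∈ ℙ^n : G_μ(ζ) = −∞ }. Then E is κ-polar. -/
open MeasureTheory Filter Topology ENNReal

noncomputable section

variable {n : ℕ}

namespace ProofAux

abbrev EV (n : ℕ) := EuclideanSpace ℂ (Fin (n + 1))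

lemma coord_le_norm (a : EV n) (i : Fin (n + 1)) : ‖a i‖ ≤ ‖a‖ := by
  rw [EuclideanSpace.norm_eq]
  refine Real.le_sqrt_of_sq_le ?_
  exact Finset.single_le_sum (f := fun j => ‖a j‖ ^ 2)
    (fun j _ => by positivity) (Finset.mem_univ i)

def nvec (v : {v : EV n // v ≠ 0}) : EV n := (‖v.1‖⁻¹ : ℝ) • v.1

lemma nvec_norm (v : {v : EV n // v ≠ 0}) : ‖nvec v‖ = 1 := by
  have h : ‖v.1‖ ≠ 0 := norm_ne_zero_iff.2 v.2
  rw [nvec, norm_smul, norm_inv, norm_norm, inv_mul_cancel₀ h]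

def uvec (x : Pn n) : EV n := nvec ⟨x.rep, x.rep_nonzero⟩

lemma uvec_norm (x : Pn n) : ‖uvec x‖ = 1 := nvec_norm _

lemma uvec_coord (x : Pn n) (i : Fin (n + 1)) : ‖uvec x i‖ ≤ 1 :=
  (coord_le_norm _ i).trans (uvec_norm x).le

def tk (x y : Pn n) : ℝ := ‖(inner ℂ (uvec x) (uvec y) : ℂ)‖ ^ 2

lemma tk_nonneg (x y : Pn n) : 0 ≤ tk x y := by rw [tk]; positivity

lemma norm_inner_uvec_le_one (x y : Pn n) : ‖(inner ℂ (uvec x) (uvec y) : ℂ)‖ ≤ 1 := by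
  have := norm_inner_le_norm (𝕜 := ℂ) (uvec x) (uvec y)
  rwa [uvec_norm, uvec_norm, mul_one] at this

lemma tk_le_one (x y : Pn n) : tk x y ≤ 1 := by
  have h := norm_inner_uvec_le_one x y
  calc tk x y ≤ 1 ^ 2 := by
        rw [tk]; exact pow_le_pow_left₀ (norm_nonneg _) h 2
    _ = 1 := one_pow 2

lemma pratio_eq (x y : Pn n) : pratio x y = Real.sqrt (1 - tk x y) := by
  have hv := x.rep_nonzero
  have hw := y.rep_nonzero
  have ha : (0:ℝ) < ‖x.rep‖ := norm_pos_iff.2 hv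
  have hb : (0:ℝ) < ‖y.rep‖ := norm_pos_iff.2 hw
  have hC : ‖(inner ℂ x.rep y.rep : ℂ)‖ ≤ ‖x.rep‖ * ‖y.rep‖ := norm_inner_le_norm _ _
  have htk : tk x y = (‖(inner ℂ x.rep y.rep : ℂ)‖ / (‖x.rep‖ * ‖y.rep‖)) ^ 2 := by
    rw [tk, uvec, uvec, nvec, nvec]
    rw [show ((‖x.rep‖⁻¹ : ℝ) • x.rep) = ((‖x.rep‖⁻¹ : ℝ) : ℂ) • x.rep from
      (RCLike.real_smul_eq_coe_smul (K := ℂ) _ _)]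
    rw [show ((‖y.rep‖⁻¹ : ℝ) • y.rep) = ((‖y.rep‖⁻¹ : ℝ) : ℂ) • y.rep from
      (RCLike.real_smul_eq_coe_smul (K := ℂ) _ _)]
    rw [inner_smul_left, inner_smul_right, Complex.conj_ofReal]
    simp only [norm_mul, Complex.norm_real, norm_inv, norm_norm, Real.norm_eq_abs,
      abs_of_pos ha, abs_of_pos hb]
    field_simp
    try ring
  rw [htk, div_pow, show (1:ℝ) - ‖(inner ℂ x.rep y.rep : ℂ)‖ ^ 2 / (‖x.rep‖ * ‖y.rep‖) ^ 2
      = (‖x.rep‖ ^ 2 * ‖y.rep‖ ^ 2 - ‖(inner ℂ x.rep y.rep : ℂ)‖ ^ 2) / (‖x.rep‖ * ‖y.rep‖) ^ 2 by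
    field_simp]
  have hsq : ‖(inner ℂ x.rep y.rep : ℂ)‖ ^ 2 ≤ (‖x.rep‖ * ‖y.rep‖) ^ 2 :=
    pow_le_pow_left₀ (norm_nonneg _) hC 2
  rw [mul_pow] at hsq
  rw [Real.sqrt_div (by linarith) _, Real.sqrt_sq (by positivity)]
  rfl

lemma tsum_harmonic : (∑' m : ℕ, ENNReal.ofReal ((1:ℝ) / (m + 1))) = ∞ := by
  by_contra h
  have hs := ENNReal.summable_toReal h
  have : Summable (fun m : ℕ => (1 : ℝ) / (m + 1)) := by
    refine hs.congr fun m => ?_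
    rw [ENNReal.toReal_ofReal (by positivity)]
  have h2 : Summable (fun m : ℕ => (1 : ℝ) / ((m + 1 : ℕ) : ℝ)) := by
    refine this.congr fun m => ?_
    push_cast; ring
  exact Real.not_summable_one_div_natCast ((_root_.summable_nat_add_iff 1).1 h2)

lemma negG_eq (x y : Pn n) :
    negG x y = (∑' m : ℕ, ENNReal.ofReal (tk x y ^ (m + 1) / (m + 1))) / 2 := by
  have h0 := tk_nonneg x y
  have h1 := tk_le_one x y
  rw [negG, pratio_eq]
  rcases eq_or_lt_of_le h1 with h | hlt
  · rw [h, sub_self, Real.sqrt_zero, if_pos rfl]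
    simp only [one_pow]
    rw [tsum_harmonic, ENNReal.top_div_of_ne_top (by simp)]
  · have hpos : 0 < 1 - tk x y := by linarith
    have hsq : Real.sqrt (1 - tk x y) ≠ 0 := ne_of_gt (Real.sqrt_pos.2 hpos)
    rw [if_neg hsq, Real.log_sqrt hpos.le]
    have hsum : HasSum (fun m : ℕ => tk x y ^ (m + 1) / (m + 1)) (-Real.log (1 - tk x y)) :=
      Real.hasSum_pow_div_log_of_abs_lt_one (by rw [abs_of_nonneg h0]; exact hlt)
    rw [← ENNReal.ofReal_tsum_of_nonneg (fun m => by positivity) hsum.summable, hsum.tsum_eq]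
    rw [neg_div' ]
    rw [ENNReal.ofReal_div_of_pos two_pos]
    norm_num

def hpre (m : ℕ) (p : (Fin m → Fin (n + 1)) × (Fin m → Fin (n + 1)))
    (v : {v : EV n // v ≠ 0}) : ℂ :=
  (starRingEnd ℂ) (∏ l, nvec v (p.1 l)) * ∏ l, nvec v (p.2 l)

lemma hpre_inv (m : ℕ) (p : (Fin m → Fin (n + 1)) × (Fin m → Fin (n + 1))) :
    ∀ (a b : {v : EV n // v ≠ 0}) (t : ℂ), (a : EV n) = t • (b : EV n) →
      hpre m p a = hpre m p b := by
  rintro ⟨a, ha⟩ ⟨b, hb⟩ t (hab : a = t • b)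
  subst hab
  have ht : t ≠ 0 := fun h => ha (by simp [h])
  have htn : ‖t‖ ≠ 0 := norm_ne_zero_iff.2 ht
  have hbn : ‖b‖ ≠ 0 := norm_ne_zero_iff.2 hb
  set c : ℂ := (‖t‖ : ℂ)⁻¹ * t with hc0
  have hcoord : ∀ i, nvec ⟨t • b, ha⟩ i = c * nvec ⟨b, hb⟩ i := by
    intro i
    simp only [nvec, norm_smul, PiLp.smul_apply, smul_eq_mul, Complex.real_smul, hc0]
    push_cast
    field_simp
    try ring
  have hcc : (starRingEnd ℂ) c * c = 1 := by
    rw [RCLike.conj_mul]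
    have hcn : ‖c‖ = 1 := by
      rw [hc0, norm_mul, norm_inv, Complex.norm_real, norm_norm, inv_mul_cancel₀ htn]
    rw [hcn]; norm_num
  simp only [hpre, hcoord]
  rw [Finset.prod_mul_distrib, Finset.prod_const, Finset.prod_mul_distrib, Finset.prod_const,
    map_mul, map_pow, mul_mul_mul_comm, ← mul_pow, hcc, one_pow, one_mul]

def hfun (m : ℕ) (p : (Fin m → Fin (n + 1)) × (Fin m → Fin (n + 1))) : Pn n → ℂ :=
  Projectivization.lift (hpre m p) (hpre_inv m p)

lemma hfun_apply (m : ℕ) (p : (Fin m → Fin (n + 1)) × (Fin m → Fin (n + 1))) (x : Pn n) :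
    hfun m p x = (starRingEnd ℂ) (∏ l, uvec x (p.1 l)) * ∏ l, uvec x (p.2 l) := by
  conv_lhs => rw [← x.mk_rep]
  rfl

lemma nvec_continuous : Continuous (nvec (n := n)) := by
  refine Continuous.smul (f := fun v : {v : EV n // v ≠ 0} => (‖v.1‖⁻¹ : ℝ)) (g := fun v => v.1) ?_ ?_
  · exact Continuous.inv₀ (Continuous.norm continuous_subtype_val)
      fun v => norm_ne_zero_iff.2 v.2
  · exact continuous_subtype_val

lemma nvec_coord_continuous (i : Fin (n + 1)) : Continuous fun v => nvec (n := n) v i :=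
  (EuclideanSpace.proj (𝕜 := ℂ) i).continuous.comp nvec_continuous

lemma hpre_continuous (m : ℕ) (p : (Fin m → Fin (n + 1)) × (Fin m → Fin (n + 1))) :
    Continuous (hpre m p) := by
  apply Continuous.mul
  · exact Complex.continuous_conj.comp
      (continuous_finset_prod _ fun l _ => nvec_coord_continuous (p.1 l))
  · exact continuous_finset_prod _ fun l _ => nvec_coord_continuous (p.2 l)

lemma hfun_continuous (m : ℕ) (p : (Fin m → Fin (n + 1)) × (Fin m → Fin (n + 1))) :
    Continuous (hfun m p) := by
  unfold hfun Projectivization.lift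
  exact (hpre_continuous m p).quotient_lift _

lemma prod_uvec_norm_le (x : Pn n) (m : ℕ) (q : Fin m → Fin (n + 1)) :
    ‖∏ l, uvec x (q l)‖ ≤ 1 := by
  rw [norm_prod]
  exact Finset.prod_le_one (fun l _ => norm_nonneg _) fun l _ => uvec_coord x (q l)

lemma hfun_norm_le (m : ℕ) (p : (Fin m → Fin (n + 1)) × (Fin m → Fin (n + 1))) (x : Pn n) :
    ‖hfun m p x‖ ≤ 1 := by
  rw [hfun_apply, norm_mul, RCLike.norm_conj]
  exact mul_le_one₀ (prod_uvec_norm_le x m p.1) (norm_nonneg _) (prod_uvec_norm_le x m p.2)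

lemma hfun_conj (m : ℕ) (p : (Fin m → Fin (n + 1)) × (Fin m → Fin (n + 1))) (x : Pn n) :
    (starRingEnd ℂ) (hfun m p x) = hfun m (p.2, p.1) x := by
  rw [hfun_apply, hfun_apply, map_mul, starRingEnd_self_apply]
  ring

lemma tk_pow (m : ℕ) (x y : Pn n) :
    ((tk x y : ℝ) : ℂ) ^ m
      = ∑ p : (Fin m → Fin (n + 1)) × (Fin m → Fin (n + 1)),
          hfun m p x * (starRingEnd ℂ) (hfun m p y) := by
  have hz : ((tk x y : ℝ) : ℂ)
      = (inner ℂ (uvec x) (uvec y) : ℂ) * (starRingEnd ℂ) (inner ℂ (uvec x) (uvec y) : ℂ) := by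
    rw [tk, RCLike.mul_conj]
    push_cast
    rfl
  have hinner : (inner ℂ (uvec x) (uvec y) : ℂ)
      = ∑ i, (starRingEnd ℂ) (uvec x i) * uvec y i := by
    simp [PiLp.inner_apply, RCLike.inner_apply, mul_comm]
  rw [hz, mul_pow, ← map_pow, hinner, Fintype.sum_pow, map_sum, Finset.sum_mul_sum,
    Fintype.sum_prod_type]
  refine Finset.sum_congr rfl fun d _ => Finset.sum_congr rfl fun e _ => ?_
  simp only [hfun_apply, map_mul, map_prod, starRingEnd_self_apply, Finset.prod_mul_distrib]
  ring

def mom (μ : Measure (Pn n)) (m : ℕ)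
    (p : (Fin m → Fin (n + 1)) × (Fin m → Fin (n + 1))) : ℂ :=
  ∫ x, hfun m p x ∂μ

lemma hfun_integrable (μ : Measure (Pn n)) [IsFiniteMeasure μ] (m : ℕ)
    (p : (Fin m → Fin (n + 1)) × (Fin m → Fin (n + 1))) : Integrable (hfun m p) μ :=
  Integrable.mono' (integrable_const 1) ((hfun_continuous m p).aestronglyMeasurable)
    (Filter.Eventually.of_forall fun x => hfun_norm_le m p x)

lemma ofReal_int (g : Pn n → ℝ) (ρ : Measure (Pn n)) :
    ((∫ y, g y ∂ρ : ℝ) : ℂ) = ∫ y, ((g y : ℝ) : ℂ) ∂ρ := (integral_ofReal).symm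

lemma mom_swap (μ : Measure (Pn n)) (m : ℕ)
    (p : (Fin m → Fin (n + 1)) × (Fin m → Fin (n + 1))) :
    mom μ m (p.2, p.1) = (starRingEnd ℂ) (mom μ m p) := by
  rw [mom, mom, ← integral_conj]
  congr 1
  funext x
  rw [hfun_conj]

lemma tk_eq_re (x y : Pn n) :
    tk x y = (∑ p : (Fin 1 → Fin (n + 1)) × (Fin 1 → Fin (n + 1)),
      hfun 1 p x * (starRingEnd ℂ) (hfun 1 p y)).re := by
  have h := tk_pow 1 x y
  rw [pow_one] at h
  rw [← h, Complex.ofReal_re]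

lemma tk_continuous_right (x : Pn n) : Continuous fun y => tk x y := by
  simp only [tk_eq_re]
  exact Complex.continuous_re.comp (continuous_finset_sum _ fun p _ =>
    continuous_const.mul (Complex.continuous_conj.comp (hfun_continuous 1 p)))

lemma tkpow_integrable (μ : Measure (Pn n)) [IsFiniteMeasure μ] (x : Pn n) (m : ℕ) :
    Integrable (fun y => tk x y ^ m) μ :=
  Integrable.mono' (integrable_const 1) (((tk_continuous_right x).pow m).aestronglyMeasurable)
    (Filter.Eventually.of_forall fun y => by
      rw [Real.norm_eq_abs, abs_of_nonneg (pow_nonneg (tk_nonneg x y) m)]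
      exact pow_le_one₀ (tk_nonneg x y) (tk_le_one x y))

lemma inner_int (μ : Measure (Pn n)) [IsFiniteMeasure μ] (m : ℕ) (x : Pn n) :
    ((∫ y, tk x y ^ m ∂μ : ℝ) : ℂ) = ∑ p, hfun m p x * mom μ m (p.2, p.1) := by
  rw [ofReal_int]
  calc ∫ y, ((tk x y ^ m : ℝ) : ℂ) ∂μ
      = ∫ y, ∑ p, hfun m p x * hfun m (p.2, p.1) y ∂μ := by
        congr 1
        funext y
        push_cast
        rw [tk_pow]
        exact Finset.sum_congr rfl fun p _ => by rw [hfun_conj]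
    _ = ∑ p, ∫ y, hfun m p x * hfun m (p.2, p.1) y ∂μ :=
        integral_finset_sum _ fun p _ => (hfun_integrable μ m _).const_mul _
    _ = ∑ p, hfun m p x * mom μ m (p.2, p.1) := by
        refine Finset.sum_congr rfl fun p _ => ?_
        rw [integral_const_mul]
        rfl

def Tm (m : ℕ) (μ ν : Measure (Pn n)) : ℝ := ∫ x, (∫ y, tk x y ^ m ∂μ) ∂ν

lemma inner_cont (μ : Measure (Pn n)) [IsFiniteMeasure μ] (m : ℕ) :
    Continuous fun x => ∫ y, tk x y ^ m ∂μ := by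
  have h : (fun x => ∫ y, tk x y ^ m ∂μ)
      = fun x => (∑ p, hfun m p x * mom μ m (p.2, p.1)).re := by
    funext x
    rw [← Complex.ofReal_re (∫ y, tk x y ^ m ∂μ), inner_int]
  rw [h]
  exact Complex.continuous_re.comp (continuous_finset_sum _ fun p _ =>
    (hfun_continuous m p).mul continuous_const)

lemma inner_nonneg (μ : Measure (Pn n)) (m : ℕ) (x : Pn n) :
    0 ≤ ∫ y, tk x y ^ m ∂μ :=
  integral_nonneg fun y => pow_nonneg (tk_nonneg x y) m

lemma inner_le_one (μ : Measure (Pn n)) [IsProbabilityMeasure μ] (m : ℕ) (x : Pn n) :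
    ∫ y, tk x y ^ m ∂μ ≤ 1 := by
  calc ∫ y, tk x y ^ m ∂μ ≤ ∫ _, (1:ℝ) ∂μ :=
        integral_mono (tkpow_integrable μ x m) (integrable_const 1)
          fun y => pow_le_one₀ (tk_nonneg x y) (tk_le_one x y)
    _ = 1 := by simp

lemma outer_int (μ ν : Measure (Pn n)) [IsFiniteMeasure μ] [IsFiniteMeasure ν] (m : ℕ) :
    ((Tm m μ ν : ℝ) : ℂ) = ∑ p, mom ν m p * (starRingEnd ℂ) (mom μ m p) := by
  rw [Tm, ofReal_int]
  calc ∫ x, ((∫ y, tk x y ^ m ∂μ : ℝ) : ℂ) ∂ν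
      = ∫ x, ∑ p, hfun m p x * mom μ m (p.2, p.1) ∂ν := by
        congr 1
        funext x
        rw [inner_int]
    _ = ∑ p, ∫ x, hfun m p x * mom μ m (p.2, p.1) ∂ν :=
        integral_finset_sum _ fun p _ => (hfun_integrable ν m p).mul_const _
    _ = ∑ p, mom ν m p * (starRingEnd ℂ) (mom μ m p) := by
        refine Finset.sum_congr rfl fun p _ => ?_
        rw [integral_mul_const, mom_swap]
        rfl

lemma Tm_nonneg (m : ℕ) (μ ν : Measure (Pn n)) : 0 ≤ Tm m μ ν :=
  integral_nonneg fun x => inner_nonneg μ m x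

lemma Tm_ineq (m : ℕ) (μ ν : Measure (Pn n)) [IsFiniteMeasure μ] [IsFiniteMeasure ν] :
    Tm m μ ν ≤ (Tm m μ μ + Tm m ν ν) / 2 := by
  have e1 : Tm m μ ν = ∑ p, (mom ν m p * (starRingEnd ℂ) (mom μ m p)).re := by
    rw [← Complex.ofReal_re (Tm m μ ν), outer_int, Complex.re_sum]
  have e2 : Tm m μ μ = ∑ p, (mom μ m p * (starRingEnd ℂ) (mom μ m p)).re := by
    rw [← Complex.ofReal_re (Tm m μ μ), outer_int, Complex.re_sum]
  have e3 : Tm m ν ν = ∑ p, (mom ν m p * (starRingEnd ℂ) (mom ν m p)).re := by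
    rw [← Complex.ofReal_re (Tm m ν ν), outer_int, Complex.re_sum]
  rw [e1, e2, e3, ← Finset.sum_add_distrib, Finset.sum_div]
  refine Finset.sum_le_sum fun p _ => ?_
  have hre : (mom ν m p * (starRingEnd ℂ) (mom μ m p)).re ≤ ‖mom ν m p‖ * ‖mom μ m p‖ := by
    calc (mom ν m p * (starRingEnd ℂ) (mom μ m p)).re
        ≤ ‖mom ν m p * (starRingEnd ℂ) (mom μ m p)‖ := Complex.re_le_norm _
      _ = ‖mom ν m p‖ * ‖mom μ m p‖ := by
          rw [norm_mul, RCLike.norm_conj]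
  have h2 : (mom μ m p * (starRingEnd ℂ) (mom μ m p)).re = ‖mom μ m p‖ ^ 2 := by
    rw [Complex.mul_conj, Complex.ofReal_re, Complex.normSq_eq_norm_sq]
  have h3 : (mom ν m p * (starRingEnd ℂ) (mom ν m p)).re = ‖mom ν m p‖ ^ 2 := by
    rw [Complex.mul_conj, Complex.ofReal_re, Complex.normSq_eq_norm_sq]
  rw [h2, h3]
  nlinarith [sq_nonneg (‖mom ν m p‖ - ‖mom μ m p‖), hre]

lemma inner_lintegral (μ : Measure (Pn n)) [IsProbabilityMeasure μ] (x : Pn n) :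
    ∫⁻ y, negG x y ∂μ
      = (∑' m : ℕ, ENNReal.ofReal ((∫ y, tk x y ^ (m + 1) ∂μ) / (m + 1))) / 2 := by
  simp only [negG_eq]
  simp_rw [ENNReal.div_eq_inv_mul]
  rw [lintegral_const_mul' _ _ (by simp : ((2:ℝ≥0∞))⁻¹ ≠ ⊤)]
  congr 1
  rw [lintegral_tsum (f := fun (m : ℕ) y => ENNReal.ofReal (tk x y ^ (m + 1) / ((m : ℝ) + 1))) fun m =>
    ((((tk_continuous_right x).pow (m + 1)).div_const ((m : ℝ) + 1)).measurable.ennreal_ofReal).aemeasurable]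
  congr 1
  funext m
  rw [← ofReal_integral_eq_lintegral_ofReal ((tkpow_integrable μ x (m + 1)).div_const _)
    (Filter.Eventually.of_forall fun y =>
      div_nonneg (pow_nonneg (tk_nonneg x y) _) (by positivity)), integral_div]

lemma inner_fun_bound (μ : Measure (Pn n)) [IsProbabilityMeasure μ] (m : ℕ) (x : Pn n) :
    ‖(∫ y, tk x y ^ (m + 1) ∂μ) / ((m : ℝ) + 1)‖ ≤ 1 := by
  rw [Real.norm_eq_abs, abs_of_nonneg (div_nonneg (inner_nonneg μ (m + 1) x) (by positivity))]
  rw [div_le_one (by positivity)]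
  have := inner_le_one μ (m + 1) x
  have hm : (1:ℝ) ≤ (m : ℝ) + 1 := by
    have : (0:ℝ) ≤ (m : ℝ) := Nat.cast_nonneg m
    linarith
  linarith

lemma mutEnergy_series (μ ν : Measure (Pn n)) [IsProbabilityMeasure μ] [IsProbabilityMeasure ν] :
    mutEnergy μ ν = (∑' m : ℕ, ENNReal.ofReal (Tm (m + 1) μ ν / (m + 1))) / 2 := by
  rw [mutEnergy, lintegral_congr (inner_lintegral μ)]
  simp_rw [ENNReal.div_eq_inv_mul]
  rw [lintegral_const_mul' _ _ (by simp : ((2:ℝ≥0∞))⁻¹ ≠ ⊤)]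
  congr 1
  rw [lintegral_tsum fun m =>
    (((inner_cont μ (m + 1)).div_const ((m : ℝ) + 1)).measurable.ennreal_ofReal).aemeasurable]
  congr 1
  funext m
  have hint : Integrable (fun x => (∫ y, tk x y ^ (m + 1) ∂μ) / ((m : ℝ) + 1)) ν :=
    Integrable.mono' (integrable_const 1)
      (((inner_cont μ (m + 1)).div_const ((m : ℝ) + 1)).aestronglyMeasurable)
      (Filter.Eventually.of_forall fun x => inner_fun_bound μ m x)
  rw [← ofReal_integral_eq_lintegral_ofReal hint
    (Filter.Eventually.of_forall fun x => div_nonneg (inner_nonneg μ (m + 1) x) (by positivity)),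
    integral_div, Tm]

lemma mutEnergy_le (μ ν : Measure (Pn n)) [IsProbabilityMeasure μ] [IsProbabilityMeasure ν] :
    mutEnergy μ ν ≤ (energy μ + energy ν) / 2 := by
  rw [mutEnergy_series μ ν, energy, energy, mutEnergy_series μ μ, mutEnergy_series ν ν]
  rw [ENNReal.div_add_div_same]
  refine ENNReal.div_le_div_right ?_ 2
  have hterm : ∀ m : ℕ, ENNReal.ofReal (Tm (m + 1) μ ν / ((m : ℝ) + 1))
      ≤ (ENNReal.ofReal (Tm (m + 1) μ μ / ((m : ℝ) + 1))
          + ENNReal.ofReal (Tm (m + 1) ν ν / ((m : ℝ) + 1))) / 2 := by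
    intro m
    have hk : (0:ℝ) < (m : ℝ) + 1 := by positivity
    have h := Tm_ineq (m + 1) μ ν
    have h1 : Tm (m + 1) μ ν / ((m : ℝ) + 1)
        ≤ (Tm (m + 1) μ μ / ((m : ℝ) + 1) + Tm (m + 1) ν ν / ((m : ℝ) + 1)) / 2 := by
      rw [← add_div, show (Tm (m + 1) μ μ + Tm (m + 1) ν ν) / ((m : ℝ) + 1) / 2
        = ((Tm (m + 1) μ μ + Tm (m + 1) ν ν) / 2) / ((m : ℝ) + 1) by ring]
      exact (div_le_div_iff_of_pos_right hk).2 h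
    calc ENNReal.ofReal (Tm (m + 1) μ ν / ((m : ℝ) + 1))
        ≤ ENNReal.ofReal ((Tm (m + 1) μ μ / ((m : ℝ) + 1)
            + Tm (m + 1) ν ν / ((m : ℝ) + 1)) / 2) := ENNReal.ofReal_le_ofReal h1
      _ = (ENNReal.ofReal (Tm (m + 1) μ μ / ((m : ℝ) + 1))
            + ENNReal.ofReal (Tm (m + 1) ν ν / ((m : ℝ) + 1))) / 2 := by
          rw [ENNReal.ofReal_div_of_pos two_pos,
            ENNReal.ofReal_add (div_nonneg (Tm_nonneg _ _ _) hk.le)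
              (div_nonneg (Tm_nonneg _ _ _) hk.le)]
          norm_num
  calc (∑' m : ℕ, ENNReal.ofReal (Tm (m + 1) μ ν / ((m : ℝ) + 1)))
      ≤ ∑' m : ℕ, (ENNReal.ofReal (Tm (m + 1) μ μ / ((m : ℝ) + 1))
          + ENNReal.ofReal (Tm (m + 1) ν ν / ((m : ℝ) + 1))) / 2 :=
        ENNReal.tsum_le_tsum hterm
    _ = (∑' m : ℕ, (ENNReal.ofReal (Tm (m + 1) μ μ / ((m : ℝ) + 1))
          + ENNReal.ofReal (Tm (m + 1) ν ν / ((m : ℝ) + 1)))) / 2 := by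
        simp_rw [div_eq_mul_inv]
        rw [ENNReal.tsum_mul_right]
    _ = (∑' m : ℕ, ENNReal.ofReal (Tm (m + 1) μ μ / ((m : ℝ) + 1))
          + ∑' m : ℕ, ENNReal.ofReal (Tm (m + 1) ν ν / ((m : ℝ) + 1))) / 2 := by
        rw [ENNReal.tsum_add]

lemma mutEnergy_ne_top (μ ν : Measure (Pn n)) [IsProbabilityMeasure μ] [IsProbabilityMeasure ν]
    (hμ : energy μ ≠ ∞) (hν : energy ν ≠ ∞) : mutEnergy μ ν ≠ ∞ := by
  refine ne_top_of_le_ne_top ?_ (mutEnergy_le μ ν)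
  exact (ENNReal.div_lt_top (by simp [hμ, hν]) (by norm_num)).ne

instance pnSetoid : Setoid {v : EV n // v ≠ 0} := projectivizationSetoid ℂ (EV n)

def smap (c : ℂˣ) (v : {v : EV n // v ≠ 0}) : {v : EV n // v ≠ 0} :=
  ⟨(c : ℂ) • v.1, smul_ne_zero (Units.ne_zero c) v.2⟩

lemma smap_continuous (c : ℂˣ) : Continuous (smap (n := n) c) :=
  Continuous.subtype_mk (continuous_subtype_val.const_smul (c : ℂ)) _

lemma smap_smap (c : ℂˣ) (u : {v : EV n // v ≠ 0}) : smap c⁻¹ (smap c u) = u := by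
  apply Subtype.ext
  simp only [smap, smul_smul]
  rw [show ((c⁻¹ : ℂˣ) : ℂ) * (c : ℂ) = ((c⁻¹ * c : ℂˣ) : ℂ) from (Units.val_mul _ _).symm]
  simp

lemma smap_image_open (c : ℂˣ) {U : Set {v : EV n // v ≠ 0}} (hU : IsOpen U) :
    IsOpen (smap c '' U) := by
  have himg : smap c '' U = smap c⁻¹ ⁻¹' U := by
    ext w
    constructor
    · rintro ⟨u, hu, rfl⟩
      rw [Set.mem_preimage, smap_smap]
      exact hu
    · intro hw
      refine ⟨smap c⁻¹ w, hw, ?_⟩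
      have := smap_smap c⁻¹ w
      rwa [inv_inv] at this
  rw [himg]
  exact hU.preimage (smap_continuous _)

lemma preimage_image_mk' (U : Set {v : EV n // v ≠ 0}) :
    (Quotient.mk' ⁻¹' (Quotient.mk' '' U) : Set {v : EV n // v ≠ 0})
      = ⋃ c : ℂˣ, smap c '' U := by
  ext w
  simp only [Set.mem_preimage, Set.mem_image, Set.mem_iUnion]
  constructor
  · rintro ⟨u, hu, huw⟩
    have hr : u ≈ w := Quotient.exact' huw
    obtain ⟨c, hc⟩ := hr
    refine ⟨c⁻¹, u, hu, ?_⟩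
    apply Subtype.ext
    simp only [smap]
    rw [show (u : EV n) = (c : ℂ) • (w : EV n) from ?_]
    · rw [smul_smul,
        show ((c⁻¹ : ℂˣ) : ℂ) * (c : ℂ) = ((c⁻¹ * c : ℂˣ) : ℂ) from (Units.val_mul _ _).symm]
      simp
    · rw [← hc]
      rfl
  · rintro ⟨c, u, hu, rfl⟩
    refine ⟨u, hu, Quotient.sound' ?_⟩
    refine ⟨c⁻¹, ?_⟩
    show (c⁻¹ : ℂˣ) • ((c : ℂ) • (u : EV n)) = (u : EV n)
    rw [Units.smul_def, smul_smul,
      show ((c⁻¹ : ℂˣ) : ℂ) * (c : ℂ) = ((c⁻¹ * c : ℂˣ) : ℂ) from (Units.val_mul _ _).symm]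
    simp

lemma isOpenMap_mk' :
    IsOpenMap (Quotient.mk' : {v : EV n // v ≠ 0} → Pn n) := by
  intro U hU
  rw [← isQuotientMap_quotient_mk'.isOpen_preimage, preimage_image_mk' U]
  exact isOpen_iUnion fun c => smap_image_open c hU

instance : SecondCountableTopology (Pn n) :=
  TopologicalSpace.Quotient.secondCountableTopology isOpenMap_mk'

lemma msupport_compl_null (ν : Measure (Pn n)) : ν ((msupport ν)ᶜ) = 0 := by
  have hsub : (msupport ν)ᶜ ⊆ ⋃₀ {U : Set (Pn n) | IsOpen U ∧ ν U = 0} := by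
    intro x hx
    simp only [msupport, Set.mem_compl_iff, Set.mem_setOf_eq] at hx
    push_neg at hx
    obtain ⟨U, hUo, hxU, hU0⟩ := hx
    exact ⟨U, ⟨hUo, hU0⟩, hxU⟩
  obtain ⟨T, hTc, hTsub, hTU⟩ :=
    TopologicalSpace.isOpen_sUnion_countable {U : Set (Pn n) | IsOpen U ∧ ν U = 0}
      fun U hU => hU.1
  refine measure_mono_null (hsub.trans hTU.symm.subset) ?_
  exact (measure_sUnion_null_iff hTc).2 fun s hs => (hTsub hs).2

end ProofAux


theorem statement8 (n : ℕ) (μ : Measure (Pn n)) (hμ : IsProbabilityMeasure μ)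
    (hfin : energy μ ≠ ∞) :
    IsPolar {ζ : Pn n | potential μ ζ = ⊥} := by
  intro ν hν hsupp
  haveI := hμ
  haveI := hν
  by_contra hνfin
  have hmut : mutEnergy μ ν = ∞ := by
    have h0 : ν ({ζ : Pn n | potential μ ζ = ⊥}ᶜ) = 0 :=
      measure_mono_null (Set.compl_subset_compl.2 hsupp) (ProofAux.msupport_compl_null ν)
    have hae : ∀ᵐ x ∂ν, (∫⁻ y, negG x y ∂μ) = ∞ := by
      have hb : ∀ᵐ x ∂ν, potential μ x = ⊥ := by
        rw [MeasureTheory.ae_iff]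
        refine measure_mono_null ?_ h0
        intro x hx
        simpa using hx
      filter_upwards [hb] with x hx
      rw [potential] at hx
      exact EReal.coe_ennreal_eq_top_iff.1 (EReal.neg_eq_bot_iff.1 hx)
    calc mutEnergy μ ν = ∫⁻ _, ∞ ∂ν := lintegral_congr_ae hae
      _ = ∞ := by simp
  exact absurd hmut (ProofAux.mutEnergy_ne_top μ ν hfin hνfin)
end
end

section
/- If B₁ ⊆ B₂ ⊆ … is an increasing sequence of Borel subsets of ℙ^n and B := ∪_n B_n, then κ(B) = lim_{n→∞} κ(B_n) = sup_n κ(B_n). -/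
open MeasureTheory Filter Topology ENNReal

noncomputable section

variable {n : ℕ}

section AuxiliaryLemmas

namespace AuxPn

abbrev EV (n : ℕ) := EuclideanSpace ℂ (Fin (n + 1))

lemma isOpenMap_quotmk :
    IsOpenMap (@Quotient.mk' _ (projectivizationSetoid ℂ (EV n))) := by
  letI : Setoid {v : EV n // v ≠ 0} := projectivizationSetoid ℂ (EV n)
  intro U hU
  have key : (Quotient.mk' : {v : EV n // v ≠ 0} → _) ⁻¹'
      ((Quotient.mk' : {v : EV n // v ≠ 0} → Quotient (projectivizationSetoid ℂ (EV n))) '' U) =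
      ⋃ a : ℂˣ, (fun w : {v : EV n // v ≠ 0} =>
        (⟨(a : ℂ) • (w : EV n), smul_ne_zero (Units.ne_zero a) w.2⟩ : {v : EV n // v ≠ 0})) ⁻¹' U := by
    ext w
    simp only [Set.mem_preimage, Set.mem_image, Set.mem_iUnion]
    constructor
    · rintro ⟨u, hu, huw⟩
      have : (projectivizationSetoid ℂ (EV n)).r w u := Quotient.eq'.mp huw.symm
      obtain ⟨a, ha⟩ := this
      refine ⟨a⁻¹, ?_⟩
      have : (a : ℂ) • (u : EV n) = (w : EV n) := ha
      have hw : ((a⁻¹ : ℂˣ) : ℂ) • (w : EV n) = (u : EV n) := by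
        rw [← this, smul_smul]
        simp
      exact Set.mem_of_eq_of_mem (Subtype.ext hw) hu
    · rintro ⟨a, ha⟩
      refine ⟨_, ha, ?_⟩
      apply Quotient.sound'
      exact ⟨a, rfl⟩
  rw [← isQuotientMap_quotient_mk'.isOpen_preimage, key]
  refine isOpen_iUnion fun a => ?_
  exact hU.preimage (Continuous.subtype_mk (continuous_subtype_val.const_smul ((a : ℂ))) _)

instance : SecondCountableTopology (Pn n) :=
  letI : Setoid {v : EV n // v ≠ 0} := projectivizationSetoid ℂ (EV n)
  TopologicalSpace.Quotient.secondCountableTopology (S := projectivizationSetoid ℂ (EV n)) isOpenMap_quotmk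

end AuxPn

namespace AuxPn

open ComplexConjugate

/-- The "projection matrix" function on nonzero vectors. -/
def gmat (v : EV n) : Fin (n + 1) → Fin (n + 1) → ℂ :=
  fun i j => v i * conj (v j) / (‖v‖ : ℂ) ^ 2

lemma gmat_smul (t : ℂ) (ht : t ≠ 0) (v : EV n) (hv : v ≠ 0) :
    gmat (t • v) = gmat v := by
  funext i j
  have hnv : (‖v‖ : ℂ) ≠ 0 := by simpa using norm_ne_zero_iff.mpr hv
  have hnt : (‖t‖ : ℂ) ≠ 0 := by simpa using norm_ne_zero_iff.mpr ht
  have h1 : ‖t • v‖ = ‖t‖ * ‖v‖ := norm_smul t v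
  have h2 : (t • v) i = t * v i := rfl
  have h3 : (t • v) j = t * v j := rfl
  have h4 : t * conj t = ((‖t‖ : ℂ)) ^ 2 := by
    rw [Complex.mul_conj, Complex.normSq_eq_norm_sq]
    push_cast
    ring
  simp only [gmat, h1, h2, h3, map_mul]
  have e1 : (((‖t‖ * ‖v‖ : ℝ)) : ℂ) ^ 2 = (‖t‖ : ℂ) ^ 2 * (‖v‖ : ℂ) ^ 2 := by
    push_cast
    ring
  have h5 : t * v i * (conj t * conj (v j)) = (t * conj t) * (v i * conj (v j)) := by ring
  rw [e1, h5, h4]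
  exact mul_div_mul_left _ _ (pow_ne_zero 2 hnt)

/-- `gmat` descends to projective space. -/
def fmat : Pn n → (Fin (n + 1) → Fin (n + 1) → ℂ) :=
  Projectivization.lift (fun v : {v : EV n // v ≠ 0} => gmat (v : EV n))
    (by
      rintro ⟨a, ha⟩ ⟨b, hb⟩ t h
      have h' : a = t • b := h
      have ht : t ≠ 0 := by
        rintro rfl
        rw [zero_smul] at h'
        exact ha h'
      show gmat a = gmat b
      rw [h']
      exact gmat_smul t ht b hb)

lemma fmat_mk (v : EV n) (hv : v ≠ 0) : fmat (Projectivization.mk ℂ v hv) = gmat v := rfl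

lemma continuous_fmat : Continuous (fmat : Pn n → _) := by
  apply continuous_coinduced_dom.mpr
  show Continuous fun v : {v : EV n // v ≠ 0} => gmat (v : EV n)
  refine continuous_pi fun i => continuous_pi fun j => ?_
  have hc : ∀ k : Fin (n + 1), Continuous fun v : {v : EV n // v ≠ 0} => (v : EV n) k := by
    intro k
    exact (continuous_apply k).comp ((PiLp.continuous_ofLp 2 _).comp continuous_subtype_val)
  apply Continuous.div
  · exact ((hc i).mul (Complex.continuous_conj.comp (hc j)))
  · have : Continuous fun v : {v : EV n // v ≠ 0} => (‖(v : EV n)‖ : ℂ) :=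
      Complex.continuous_ofReal.comp (continuous_norm.comp continuous_subtype_val)
    exact this.pow 2
  · intro v
    have : ‖(v : EV n)‖ ≠ 0 := norm_ne_zero_iff.mpr v.2
    simp [this]

lemma sum_gmat_mul (u : EV n) (hu : u ≠ 0) (i : Fin (n + 1)) :
    ∑ j, gmat u i j * u j = u i := by
  have : ∀ j, gmat u i j * u j = (u i / (‖u‖ : ℂ) ^ 2) * (conj (u j) * u j) := by
    intro j
    simp only [gmat]
    ring
  rw [Finset.sum_congr rfl fun j _ => this j, ← Finset.mul_sum]
  have hinner : ∑ j, conj (u j) * u j = (inner ℂ u u : ℂ) := by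
    rw [PiLp.inner_apply]
    exact Finset.sum_congr rfl fun j _ => by rw [RCLike.inner_apply]; ring
  rw [hinner, inner_self_eq_norm_sq_to_K]
  have hnu : (‖u‖ : ℂ) ≠ 0 := by simpa using norm_ne_zero_iff.mpr hu
  field_simp
  rfl

lemma injective_fmat : Function.Injective (fmat : Pn n → _) := by
  intro x y
  induction x using Projectivization.ind with
  | h v hv =>
  induction y using Projectivization.ind with
  | h w hw =>
  intro h
  rw [fmat_mk, fmat_mk] at h
  rw [Projectivization.mk_eq_mk_iff']
  set c : ℂ := (inner ℂ w v : ℂ) / (‖w‖ : ℂ) ^ 2 with hc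
  refine ⟨c, ?_⟩
  ext i
  have hv' := sum_gmat_mul v hv i
  have hw' : ∑ j, gmat w i j * v j = w i * c := by
    have : ∀ j, gmat w i j * v j = (w i / (‖w‖ : ℂ) ^ 2) * (conj (w j) * v j) := by
      intro j
      simp only [gmat]
      ring
    rw [Finset.sum_congr rfl fun j _ => this j, ← Finset.mul_sum]
    have hinner : ∑ j, conj (w j) * v j = (inner ℂ w v : ℂ) := by
      rw [PiLp.inner_apply]
      exact Finset.sum_congr rfl fun j _ => by rw [RCLike.inner_apply]; ring
    rw [hinner, hc]
    ring
  show (c • w) i = v i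
  have hcw : (c • w) i = c * w i := rfl
  rw [hcw, ← hv', h, hw']
  ring

instance : T2Space (Pn n) :=
  T2Space.of_injective_continuous injective_fmat continuous_fmat

instance : CompactSpace (Pn n) := by
  haveI : CompactSpace (Metric.sphere (0 : EV n) 1) :=
    isCompact_iff_compactSpace.mp (isCompact_sphere _ _)
  set f : Metric.sphere (0 : EV n) 1 → Pn n := fun v =>
    Projectivization.mk ℂ (v : EV n)
      (by
        have h1 := mem_sphere_zero_iff_norm.mp v.2
        intro h0
        rw [h0] at h1
        simp at h1) with hf
  have hsurj : Function.Surjective f := by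
    intro x
    induction x using Projectivization.ind with
    | h v hv =>
    have hnv : ‖v‖ ≠ 0 := norm_ne_zero_iff.mpr hv
    refine ⟨⟨(‖v‖⁻¹ : ℝ) • v, ?_⟩, ?_⟩
    · rw [mem_sphere_zero_iff_norm, norm_smul]
      simp [hnv]
    · rw [hf]
      rw [Projectivization.mk_eq_mk_iff']
      exact ⟨algebraMap ℝ ℂ (‖v‖⁻¹), algebraMap_smul ℂ _ v⟩
  have hcont : Continuous f := by
    apply Continuous.comp
    · exact continuous_quotient_mk'
    · exact Continuous.subtype_mk continuous_subtype_val _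
  rw [← isCompact_univ_iff, ← Set.range_eq_univ.mpr hsurj]
  exact isCompact_range hcont

instance : TopologicalSpace.PseudoMetrizableSpace (Pn n) := by
  infer_instance

end AuxPn


namespace AuxPn

lemma robin_anti {E F : Set (Pn n)} (h : E ⊆ F) : robin F ≤ robin E :=
  le_iInf fun μ => le_iInf fun hμ => le_iInf fun hs =>
    iInf_le_of_le μ (iInf_le_of_le hμ (iInf_le_of_le (hs.trans h) le_rfl))

lemma kappa_mono {E F : Set (Pn n)} (h : E ⊆ F) : kappa E ≤ kappa F := by
  apply EReal.exp_monotone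
  rw [EReal.neg_le_neg_iff]
  exact EReal.coe_ennreal_le_coe_ennreal_iff.mpr (robin_anti h)

lemma measure_msupport_compl (μ : Measure (Pn n)) : μ (msupport μ)ᶜ = 0 := by
  have hset : (msupport μ)ᶜ = ⋃₀ {U : Set (Pn n) | IsOpen U ∧ μ U = 0} := by
    ext x
    simp only [Set.mem_compl_iff, msupport, Set.mem_setOf_eq, Set.mem_sUnion, not_forall]
    constructor
    · rintro ⟨U, hopen, hmem, h0⟩
      exact ⟨U, ⟨hopen, not_ne_iff.mp h0⟩, hmem⟩
    · rintro ⟨U, ⟨hopen, h0⟩, hmem⟩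
      exact ⟨U, hopen, hmem, not_ne_iff.mpr h0⟩
  obtain ⟨T, hTc, hTsub, hTeq⟩ :=
    TopologicalSpace.isOpen_sUnion_countable {U : Set (Pn n) | IsOpen U ∧ μ U = 0}
      (fun U hU => hU.1)
  rw [hset, ← hTeq]
  exact (measure_sUnion_null_iff hTc).mpr fun U hU => (hTsub hU).2

lemma energy_smul (c : ℝ≥0∞) (hc : c ≠ ∞) (σ : Measure (Pn n)) :
    energy (c • σ) = c * (c * energy σ) := by
  unfold energy mutEnergy
  calc ∫⁻ x, ∫⁻ y, negG x y ∂(c • σ) ∂(c • σ)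
      = c * ∫⁻ x, ∫⁻ y, negG x y ∂(c • σ) ∂σ := lintegral_smul_measure _ _
    _ = c * ∫⁻ x, c * ∫⁻ y, negG x y ∂σ ∂σ := by
        congr 1
        exact lintegral_congr fun x => lintegral_smul_measure _ _
    _ = c * (c * ∫⁻ x, ∫⁻ y, negG x y ∂σ ∂σ) := by
        rw [lintegral_const_mul' _ _ hc]

lemma energy_restrict_le (μ : Measure (Pn n)) (F : Set (Pn n)) :
    energy (μ.restrict F) ≤ energy μ := by
  unfold energy mutEnergy
  refine lintegral_mono' Measure.restrict_le_self fun x => ?_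
  exact lintegral_mono' Measure.restrict_le_self le_rfl

lemma robin_iUnion_le (B : ℕ → Set (Pn n)) (hB : ∀ m, MeasurableSet (B m))
    (hmono : Monotone B) : (⨅ m, robin (B m)) ≤ robin (⋃ m, B m) := by
  refine le_iInf fun μ => le_iInf fun hμ => le_iInf fun hsupp => ?_
  by_cases hE : energy μ = ∞
  · rw [hE]
    exact le_top
  have h1 : μ (⋃ m, B m) = 1 := by
    have hc : μ (⋃ m, B m)ᶜ = 0 :=
      measure_mono_null (Set.compl_subset_compl.mpr hsupp) (measure_msupport_compl μ)
    have hle := measure_union_le (μ := μ) (⋃ m, B m) (⋃ m, B m)ᶜ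
    rw [Set.union_compl_self, hc, add_zero, measure_univ] at hle
    exact le_antisymm prob_le_one hle
  have key : ∀ a : ℝ≥0∞, 0 < a → a < 1 →
      (⨅ m, robin (B m)) ≤ a⁻¹ * (a⁻¹ * energy μ) := by
    intro a ha0 ha1
    have hsup : a < ⨆ m, μ (B m) := by
      rw [← Directed.measure_iUnion (hmono.directed_le), h1]
      exact ha1
    obtain ⟨m, hm⟩ := lt_iSup_iff.mp hsup
    obtain ⟨F, hFB, hFclosed, haF⟩ :=
      (hB m).exists_lt_isClosed_of_ne_top (measure_ne_top μ _) hm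
    have hF0 : μ F ≠ 0 := (ha0.trans haF).ne'
    have hFtop : μ F ≠ ∞ := measure_ne_top μ F
    have hinvtop : (μ F)⁻¹ ≠ ∞ := by simp [hF0]
    set ν : Measure (Pn n) := (μ F)⁻¹ • μ.restrict F with hν
    have hprob : IsProbabilityMeasure ν := by
      constructor
      rw [hν]
      simp only [Measure.smul_apply, smul_eq_mul, Measure.restrict_apply_univ]
      exact ENNReal.inv_mul_cancel hF0 hFtop
    have hsuppν : msupport ν ⊆ B m := by
      intro x hx
      refine hFB ?_
      by_contra hxF
      refine hx Fᶜ hFclosed.isOpen_compl hxF ?_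
      rw [hν]
      simp only [Measure.smul_apply, smul_eq_mul]
      rw [Measure.restrict_apply hFclosed.measurableSet.compl]
      simp
    have hEν : energy ν ≤ a⁻¹ * (a⁻¹ * energy μ) := by
      rw [hν, energy_smul _ hinvtop]
      have hi : (μ F)⁻¹ ≤ a⁻¹ := ENNReal.inv_le_inv.mpr haF.le
      exact mul_le_mul' hi (mul_le_mul' hi (energy_restrict_le μ F))
    refine le_trans (iInf_le_of_le m ?_) hEν
    exact iInf_le_of_le ν (iInf_le_of_le hprob (iInf_le_of_le hsuppν le_rfl))
  have h1top : (1 : ℝ≥0∞) ≠ ∞ := one_ne_top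
  have hinv : Tendsto (fun a : ℝ≥0∞ => a⁻¹) (𝓝[<] 1) (𝓝 1) := by
    have : Tendsto (fun a : ℝ≥0∞ => a⁻¹) (𝓝 1) (𝓝 1⁻¹) :=
      (continuous_inv.tendsto 1)
    rw [inv_one] at this
    exact this.mono_left nhdsWithin_le_nhds
  have htend : Tendsto (fun a : ℝ≥0∞ => a⁻¹ * (a⁻¹ * energy μ)) (𝓝[<] 1)
      (𝓝 (energy μ)) := by
    have hmul1 : Tendsto (fun a : ℝ≥0∞ => a⁻¹ * energy μ) (𝓝[<] 1)
        (𝓝 (1 * energy μ)) := ENNReal.Tendsto.mul_const hinv (Or.inl one_ne_zero)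
    rw [one_mul] at hmul1
    have hmul2 := ENNReal.Tendsto.mul hinv (Or.inl one_ne_zero) hmul1 (Or.inr one_ne_top)
    rw [one_mul] at hmul2
    exact hmul2
  haveI : (𝓝[<] (1 : ℝ≥0∞)).NeBot :=
    nhdsWithin_Iio_self_neBot' ⟨0, zero_lt_one⟩
  refine ge_of_tendsto htend ?_
  filter_upwards [Ioo_mem_nhdsLT_of_mem (Set.mem_Ioc.mpr ⟨zero_lt_one, le_rfl⟩)] with a ha
  exact key a ha.1 ha.2

end AuxPn


end AuxiliaryLemmas

theorem statement11 (n : ℕ) (B : ℕ → Set (Pn n))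
    (hB : ∀ m, MeasurableSet (B m)) (hmono : Monotone B) :
    Tendsto (fun m => kappa (B m)) atTop (𝓝 (kappa (⋃ m, B m))) ∧
    kappa (⋃ m, B m) = ⨆ m, kappa (B m) := by
  have hanti : Antitone fun m => robin (B m) := fun i j hij => AuxPn.robin_anti (hmono hij)
  have hrobin_eq : robin (⋃ m, B m) = ⨅ m, robin (B m) :=
    le_antisymm (le_iInf fun m => AuxPn.robin_anti (Set.subset_iUnion B m))
      (AuxPn.robin_iUnion_le B hB hmono)
  have hcont : Continuous fun t : ℝ≥0∞ => EReal.exp (-(t : EReal)) := by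
    have h1 : Continuous EReal.exp := by
      have h := EReal.expHomeomorph.continuous
      have he : ⇑EReal.expHomeomorph = EReal.exp := funext EReal.expHomeomorph_apply
      rwa [he] at h
    exact h1.comp (continuous_neg.comp continuous_coe_ennreal_ereal)
  have htendr : Tendsto (fun m => robin (B m)) atTop (𝓝 (⨅ m, robin (B m))) :=
    tendsto_atTop_iInf hanti
  have htendk : Tendsto (fun m => kappa (B m)) atTop (𝓝 (kappa (⋃ m, B m))) := by
    have heq : kappa (⋃ m, B m) =
        EReal.exp (-(((⨅ m, robin (B m)) : ℝ≥0∞) : EReal)) := by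
      rw [kappa, hrobin_eq]
    rw [heq]
    exact (hcont.tendsto _).comp htendr
  have hmonok : Monotone fun m => kappa (B m) := fun i j hij => AuxPn.kappa_mono (hmono hij)
  have htends : Tendsto (fun m => kappa (B m)) atTop (𝓝 (⨆ m, kappa (B m))) :=
    tendsto_atTop_iSup hmonok
  exact ⟨htendk, tendsto_nhds_unique htendk htends⟩

end
end

section
/- Let h : [0,1] → ℝ⁺ be a function with h(0) = 0 and ∫₀¹ h(s)/s ds < +∞, and let μ be a probability measure on ℙ^n such that μ(B(ζ,s)) ≤ h(s) for every ζ ∈ ℙ^n and every s ∈ [0,1], where B(ζ,s) is the ball of radius s for the geodesic distance d. Then the potential G_μ is bounded on ℙ^n (there is C > 0 with −C ≤ G_μ ≤ 0) and I(μ) < +∞. -/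
open MeasureTheory Filter Topology ENNReal

noncomputable section

variable {n : ℕ}

def pr2 (u v : EuclideanSpace ℂ (Fin (n + 1))) : ℝ :=
  Real.sqrt (‖u‖ ^ 2 * ‖v‖ ^ 2 - ‖(inner ℂ u v : ℂ)‖ ^ 2) / (‖u‖ * ‖v‖)

lemma pratio_def (x y : Pn n) : pratio x y = pr2 x.rep y.rep := rfl

lemma pr2_smul_right (u v : EuclideanSpace ℂ (Fin (n + 1))) (c : ℂ) (hc : c ≠ 0) :
    pr2 u (c • v) = pr2 u v := by
  have hc' : (0:ℝ) < ‖c‖ := norm_pos_iff.2 hc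
  unfold pr2
  rw [norm_smul, inner_smul_right, norm_mul]
  have h1 : ‖u‖ ^ 2 * (‖c‖ * ‖v‖) ^ 2 - (‖c‖ * ‖(inner ℂ u v : ℂ)‖) ^ 2
      = ‖c‖ ^ 2 * (‖u‖ ^ 2 * ‖v‖ ^ 2 - ‖(inner ℂ u v : ℂ)‖ ^ 2) := by ring
  have h2 : ‖u‖ * (‖c‖ * ‖v‖) = ‖c‖ * (‖u‖ * ‖v‖) := by ring
  rw [h1, h2, Real.sqrt_mul (sq_nonneg _), Real.sqrt_sq (norm_nonneg c),
    mul_div_mul_left _ _ (ne_of_gt hc')]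

lemma pratio_mk (x : Pn n) (v : EuclideanSpace ℂ (Fin (n + 1))) (hv : v ≠ 0) :
    pratio x (Projectivization.mk ℂ v hv) = pr2 x.rep v := by
  obtain ⟨a, ha⟩ := Projectivization.exists_smul_eq_mk_rep ℂ v hv
  rw [pratio_def, ← ha, Units.smul_def, pr2_smul_right _ _ _ a.ne_zero]

lemma continuous_pratio (x : Pn n) : Continuous (fun y : Pn n => pratio x y) := by
  have hq : Topology.IsQuotientMap
      (Quotient.mk' (s := projectivizationSetoid ℂ (EuclideanSpace ℂ (Fin (n + 1)))) :
      {v : EuclideanSpace ℂ (Fin (n + 1)) // v ≠ 0} → Pn n) := isQuotientMap_quotient_mk'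
  apply hq.continuous_iff.2
  have : (fun y : Pn n => pratio x y) ∘
      (Quotient.mk' (s := projectivizationSetoid ℂ (EuclideanSpace ℂ (Fin (n + 1))))) =
      fun v : {v : EuclideanSpace ℂ (Fin (n + 1)) // v ≠ 0} => pr2 x.rep v.1 := by
    funext v
    exact pratio_mk x v.1 v.2
  erw [this]
  have hx : ‖x.rep‖ ≠ 0 := norm_ne_zero_iff.2 x.rep_nonzero
  apply Continuous.div
  · exact Real.continuous_sqrt.comp <|
      ((continuous_const.pow 2).mul (continuous_subtype_val.norm.pow 2)).sub
        ((Continuous.inner continuous_const continuous_subtype_val).norm.pow 2)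
  · exact continuous_const.mul continuous_subtype_val.norm
  · intro v
    have : ‖v.1‖ ≠ 0 := norm_ne_zero_iff.2 v.2
    positivity

lemma pratio_nonneg (x y : Pn n) : 0 ≤ pratio x y :=
  div_nonneg (Real.sqrt_nonneg _) (by positivity)

lemma pratio_le_one (x y : Pn n) : pratio x y ≤ 1 := by
  have hx : (0:ℝ) < ‖x.rep‖ := norm_pos_iff.2 x.rep_nonzero
  have hy : (0:ℝ) < ‖y.rep‖ := norm_pos_iff.2 y.rep_nonzero
  rw [pratio_def, pr2, div_le_one (by positivity)]
  calc Real.sqrt (‖x.rep‖ ^ 2 * ‖y.rep‖ ^ 2 - ‖(inner ℂ x.rep y.rep : ℂ)‖ ^ 2)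
      ≤ Real.sqrt ((‖x.rep‖ * ‖y.rep‖) ^ 2) := by
        apply Real.sqrt_le_sqrt; nlinarith [sq_nonneg ‖(inner ℂ x.rep y.rep : ℂ)‖]
    _ = ‖x.rep‖ * ‖y.rep‖ := Real.sqrt_sq (by positivity)

lemma arcsin_le_pi_div_two_mul {u : ℝ} (h0 : 0 ≤ u) (h1 : u ≤ 1) :
    Real.arcsin u ≤ Real.pi / 2 * u := by
  have hθ0 : 0 ≤ Real.arcsin u := Real.arcsin_nonneg.2 h0
  have hθ1 : Real.arcsin u ≤ Real.pi / 2 := Real.arcsin_le_pi_div_two u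
  have hs := Real.mul_le_sin hθ0 hθ1
  rw [Real.sin_arcsin (by linarith) h1] at hs
  have hπ : 0 < Real.pi := Real.pi_pos
  have h2 : Real.pi / 2 * (2 / Real.pi * Real.arcsin u) = Real.arcsin u := by
    field_simp
  calc Real.arcsin u = Real.pi / 2 * (2 / Real.pi * Real.arcsin u) := h2.symm
    _ ≤ Real.pi / 2 * u := by
        apply mul_le_mul_of_nonneg_left hs (by positivity)

theorem statement12 (n : ℕ) (h : ℝ → ℝ) (hnn : ∀ s ∈ Set.Icc (0 : ℝ) 1, 0 ≤ h s)
    (h0 : h 0 = 0)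
    (hint : (∫⁻ s in Set.Ioc (0 : ℝ) 1, ENNReal.ofReal (h s / s)) ≠ ∞)
    (μ : Measure (Pn n)) (hμ : IsProbabilityMeasure μ)
    (hball : ∀ ζ : Pn n, ∀ s ∈ Set.Icc (0 : ℝ) 1,
      μ {η : Pn n | gd ζ η < s} ≤ ENNReal.ofReal (h s)) :
    (∃ C : ℝ, 0 < C ∧ ∀ ζ : Pn n,
      ((-C : ℝ) : EReal) ≤ potential μ ζ ∧ potential μ ζ ≤ 0) ∧
    energy μ ≠ ∞ := by
  classical
  set c : ℝ := Real.sqrt 2 * (Real.pi / 2) with hc_def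
  have hsqrt2 : (1:ℝ) < Real.sqrt 2 := by
    rw [show (1:ℝ) = Real.sqrt 1 by simp]
    exact Real.sqrt_lt_sqrt (by norm_num) (by norm_num)
  have hπ : (3:ℝ) < Real.pi := Real.pi_gt_three
  have hc1 : (1:ℝ) < c := by rw [hc_def]; nlinarith
  have hc0 : (0:ℝ) < c := by linarith
  set T : ℝ := Real.log c with hT_def
  have hT0 : 0 < T := Real.log_pos hc1
  set I : ℝ≥0∞ := ∫⁻ s in Set.Ioc (0 : ℝ) 1, ENNReal.ofReal (h s / s) with hI_def
  set K : ℝ≥0∞ := ENNReal.ofReal T + I with hK_def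
  have hKtop : K ≠ ∞ := ENNReal.add_ne_top.2 ⟨ENNReal.ofReal_ne_top, hint⟩
  have key : ∀ x : Pn n, (∫⁻ y, negG x y ∂μ) ≤ K := by
    intro x
    -- the set where the kernel is infinite is null
    have hμN : μ {y : Pn n | pratio x y = 0} = 0 := by
      by_contra hN
      set ε : ℝ := (μ {y : Pn n | pratio x y = 0}).toReal with hε
      have hεfin : μ {y : Pn n | pratio x y = 0} ≠ ∞ := measure_ne_top μ _
      have hε0 : 0 < ε := ENNReal.toReal_pos hN hεfin
      have hhs : ∀ s ∈ Set.Ioc (0:ℝ) 1, ε ≤ h s := by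
        intro s hs
        have hle : μ {y : Pn n | pratio x y = 0} ≤ ENNReal.ofReal (h s) := by
          refine le_trans (measure_mono ?_) (hball x s ⟨le_of_lt hs.1, hs.2⟩)
          intro y hy
          simp only [Set.mem_setOf_eq] at hy ⊢
          rw [gd, hy, Real.arcsin_zero, mul_zero]
          exact hs.1
        calc ε ≤ (ENNReal.ofReal (h s)).toReal :=
              ENNReal.toReal_mono ENNReal.ofReal_ne_top hle
          _ = h s := ENNReal.toReal_ofReal (hnn s ⟨le_of_lt hs.1, hs.2⟩)
      apply hint
      have hinf : (∫⁻ s in Set.Ioc (0:ℝ) 1, ENNReal.ofReal (ε / s)) = ∞ := by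
        by_contra hfin
        have hmeas : Measurable fun s : ℝ => ε / s := measurable_const.div measurable_id
        have hInt : IntegrableOn (fun s : ℝ => ε / s) (Set.Ioc 0 1) := by
          refine ⟨hmeas.aestronglyMeasurable, ?_⟩
          rw [HasFiniteIntegral]
          have : (∫⁻ s in Set.Ioc (0:ℝ) 1, ‖ε / s‖ₑ)
              = ∫⁻ s in Set.Ioc (0:ℝ) 1, ENNReal.ofReal (ε / s) := by
            apply lintegral_congr_ae
            filter_upwards [ae_restrict_mem measurableSet_Ioc] with s hs
            rw [Real.enorm_eq_ofReal (div_nonneg hε0.le hs.1.le)]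
          rw [this, lt_top_iff_ne_top]
          exact hfin
        have hInt2 : IntegrableOn (fun s : ℝ => s ^ (-1:ℝ)) (Set.Ioo (0:ℝ) 1) := by
          have h1 : IntegrableOn (fun s : ℝ => ε / s) (Set.Ioo (0:ℝ) 1) :=
            hInt.mono_set Set.Ioo_subset_Ioc_self
          have h2 : IntegrableOn (fun s : ℝ => ε⁻¹ * (ε / s)) (Set.Ioo (0:ℝ) 1) :=
            h1.const_mul ε⁻¹
          apply h2.congr_fun ?_ measurableSet_Ioo
          intro s hs
          show ε⁻¹ * (ε / s) = s ^ (-1:ℝ)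
          rw [Real.rpow_neg_one, ← mul_div_assoc, inv_mul_cancel₀ (ne_of_gt hε0), one_div]
        have := (intervalIntegral.integrableOn_Ioo_rpow_iff zero_lt_one).1 hInt2
        linarith
      rw [← hI_def] at *
      rw [eq_top_iff, ← hinf]
      apply setLIntegral_mono' measurableSet_Ioc
      intro s hs
      apply ENNReal.ofReal_le_ofReal
      gcongr
      · exact hs.1.le
      · exact hhs s hs
    set f : Pn n → ℝ := fun y => -Real.log (pratio x y) with hf_def
    have hf_nn : ∀ y, 0 ≤ f y := fun y =>
      neg_nonneg.2 (Real.log_nonpos (pratio_nonneg x y) (pratio_le_one x y))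
    have hf_meas : Measurable f := (Real.measurable_log.comp (continuous_pratio x).measurable).neg
    have hcongr : (∫⁻ y, negG x y ∂μ) = ∫⁻ y, ENNReal.ofReal (f y) ∂μ := by
      apply lintegral_congr_ae
      have hae : ∀ᵐ y ∂μ, pratio x y ≠ 0 := by
        rw [ae_iff]
        simpa only [ne_eq, not_not] using hμN
      filter_upwards [hae] with y hy
      rw [negG, if_neg hy]
    rw [hcongr, lintegral_eq_lintegral_meas_lt μ (ae_of_all μ hf_nn) hf_meas.aemeasurable]
    rw [← Set.Ioc_union_Ioi_eq_Ioi (le_of_lt hT0),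
      lintegral_union measurableSet_Ioi (Set.Ioc_disjoint_Ioi le_rfl)]
    rw [hK_def]
    apply add_le_add
    · calc ∫⁻ t in Set.Ioc (0:ℝ) T, μ {a | t < f a}
          ≤ ∫⁻ _ in Set.Ioc (0:ℝ) T, 1 := lintegral_mono fun t => prob_le_one
        _ = ENNReal.ofReal T := by
            rw [setLIntegral_one, Real.volume_Ioc, sub_zero]
    · have hsub : ∀ t ∈ Set.Ioi T, μ {a | t < f a} ≤ ENNReal.ofReal (h (c * Real.exp (-t))) := by
        intro t ht
        rw [Set.mem_Ioi] at ht
        have hu0 : 0 < c * Real.exp (-t) := by positivity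
        have hu1 : c * Real.exp (-t) < 1 := by
          have h1 : Real.exp (-t) < Real.exp (-T) := Real.exp_lt_exp.2 (by linarith)
          have h2 : Real.exp (-T) = c⁻¹ := by rw [Real.exp_neg, hT_def, Real.exp_log hc0]
          calc c * Real.exp (-t) < c * c⁻¹ := mul_lt_mul_of_pos_left (h2 ▸ h1) hc0
            _ = 1 := mul_inv_cancel₀ (ne_of_gt hc0)
        refine le_trans (measure_mono ?_) (hball x _ ⟨le_of_lt hu0, le_of_lt hu1⟩)
        intro y hy
        simp only [Set.mem_setOf_eq] at hy ⊢
        have hp0 : 0 ≤ pratio x y := pratio_nonneg x y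
        have hp1 : pratio x y ≤ 1 := pratio_le_one x y
        have ht0 : 0 < t := lt_trans hT0 ht
        have hfy : t < -Real.log (pratio x y) := hy
        rcases eq_or_lt_of_le hp0 with hp|hp
        · rw [gd, ← hp, Real.arcsin_zero, mul_zero]
          exact hu0
        · have hlt : pratio x y < Real.exp (-t) := (Real.log_lt_iff_lt_exp hp).1 (by linarith)
          have hex1 : Real.exp (-t) ≤ 1 := Real.exp_le_one_iff.2 (by linarith)
          have harc : Real.arcsin (pratio x y) < Real.arcsin (Real.exp (-t)) :=
            Real.strictMonoOn_arcsin ⟨by linarith, hp1⟩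
              ⟨by linarith [Real.exp_pos (-t)], hex1⟩ hlt
          have harc2 : Real.arcsin (Real.exp (-t)) ≤ Real.pi / 2 * Real.exp (-t) :=
            arcsin_le_pi_div_two_mul (Real.exp_pos _).le hex1
          rw [gd]
          calc Real.sqrt 2 * Real.arcsin (pratio x y)
              < Real.sqrt 2 * Real.arcsin (Real.exp (-t)) :=
                mul_lt_mul_of_pos_left harc (by positivity)
            _ ≤ Real.sqrt 2 * (Real.pi / 2 * Real.exp (-t)) :=
                mul_le_mul_of_nonneg_left harc2 (Real.sqrt_nonneg 2)
            _ = c * Real.exp (-t) := by rw [hc_def]; ring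
      have himg : (fun t : ℝ => c * Real.exp (-t)) '' Set.Ioi T = Set.Ioo 0 1 := by
        ext s
        simp only [Set.mem_image, Set.mem_Ioi, Set.mem_Ioo]
        constructor
        · rintro ⟨t, ht, rfl⟩
          refine ⟨by positivity, ?_⟩
          have h1 : Real.exp (-t) < Real.exp (-T) := Real.exp_lt_exp.2 (by linarith)
          have h2 : Real.exp (-T) = c⁻¹ := by rw [Real.exp_neg, hT_def, Real.exp_log hc0]
          calc c * Real.exp (-t) < c * c⁻¹ := mul_lt_mul_of_pos_left (h2 ▸ h1) hc0
            _ = 1 := mul_inv_cancel₀ (ne_of_gt hc0)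
        · rintro ⟨hs0, hs1⟩
          refine ⟨Real.log (c / s), ?_, ?_⟩
          · rw [hT_def]
            apply Real.log_lt_log hc0
            rw [lt_div_iff₀ hs0]
            nlinarith
          · rw [Real.exp_neg, Real.exp_log (by positivity)]
            field_simp
      have hinj : Set.InjOn (fun t : ℝ => c * Real.exp (-t)) (Set.Ioi T) := by
        intro a _ b _ hab
        simp only at hab
        have h1 : Real.exp (-a) = Real.exp (-b) := mul_left_cancel₀ (ne_of_gt hc0) hab
        have h2 : -a = -b := Real.exp_eq_exp.1 h1
        linarith
      have hderiv : ∀ t ∈ Set.Ioi T, HasDerivWithinAt (fun t : ℝ => c * Real.exp (-t))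
          (-(c * Real.exp (-t))) (Set.Ioi T) t := by
        intro t _
        have h1 : HasDerivAt (fun t : ℝ => Real.exp (-t)) (Real.exp (-t) * (-1)) t :=
          (hasDerivAt_neg t).exp
        have h2 := h1.const_mul c
        have h3 : c * (Real.exp (-t) * (-1)) = -(c * Real.exp (-t)) := by ring
        rw [h3] at h2
        exact h2.hasDerivWithinAt
      have hfderiv : ∀ t ∈ Set.Ioi T, HasFDerivWithinAt (fun t : ℝ => c * Real.exp (-t))
          ((1 : ℝ →L[ℝ] ℝ).smulRight (-(c * Real.exp (-t)))) (Set.Ioi T) t :=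
        fun t ht => (hderiv t ht).hasFDerivWithinAt
      have heq := lintegral_image_eq_lintegral_abs_det_fderiv_mul volume measurableSet_Ioi
          hfderiv hinj (fun s => ENNReal.ofReal (h s / s))
      simp only [ContinuousLinearMap.smulRight_one_eq_toSpanSingleton, ContinuousLinearMap.det_toSpanSingleton] at heq
      rw [himg] at heq
      calc ∫⁻ t in Set.Ioi T, μ {a | t < f a}
          ≤ ∫⁻ t in Set.Ioi T, ENNReal.ofReal (h (c * Real.exp (-t))) :=
            setLIntegral_mono' measurableSet_Ioi hsub
        _ ≤ ∫⁻ t in Set.Ioi T, ENNReal.ofReal |(-(c * Real.exp (-t)))| *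
              ENNReal.ofReal (h (c * Real.exp (-t)) / (c * Real.exp (-t))) := by
            apply setLIntegral_mono' measurableSet_Ioi
            intro t _
            have hu0 : 0 < c * Real.exp (-t) := by positivity
            have hne : c * Real.exp (-t) ≠ 0 := ne_of_gt hu0
            have heq2 : ENNReal.ofReal |(-(c * Real.exp (-t)))| *
                ENNReal.ofReal (h (c * Real.exp (-t)) / (c * Real.exp (-t)))
                = ENNReal.ofReal (h (c * Real.exp (-t))) := by
              rw [abs_neg, abs_of_pos hu0, ← ENNReal.ofReal_mul hu0.le]
              congr 1
              field_simp
            rw [heq2]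
        _ = ∫⁻ s in Set.Ioo (0:ℝ) 1, ENNReal.ofReal (h s / s) := heq.symm
        _ ≤ I := lintegral_mono_set Set.Ioo_subset_Ioc_self
  refine ⟨⟨K.toReal + 1, ?_, fun ζ => ⟨?_, ?_⟩⟩, ?_⟩
  · have := ENNReal.toReal_nonneg (a := K)
    linarith
  · rw [potential, show ((-(K.toReal + 1) : ℝ) : EReal) = -(((K.toReal + 1 : ℝ)) : EReal) from
      EReal.coe_neg _, EReal.neg_le_neg_iff]
    calc ((∫⁻ y, negG ζ y ∂μ : ℝ≥0∞) : EReal) ≤ (K : EReal) :=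
          EReal.coe_ennreal_le_coe_ennreal_iff.2 (key ζ)
      _ = ((K.toReal : ℝ) : EReal) := by
          conv_lhs => rw [← ENNReal.ofReal_toReal hKtop]
          rw [EReal.coe_ennreal_ofReal, max_eq_left ENNReal.toReal_nonneg]
      _ ≤ ((K.toReal + 1 : ℝ) : EReal) := EReal.coe_le_coe_iff.2 (by linarith)
  · rw [potential, show (0:EReal) = -0 from (neg_zero).symm, EReal.neg_le_neg_iff]
    exact EReal.coe_ennreal_nonneg _
  · rw [energy, mutEnergy]
    have hle : (∫⁻ x, ∫⁻ y, negG x y ∂μ ∂μ) ≤ K := by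
      calc (∫⁻ x, ∫⁻ y, negG x y ∂μ ∂μ) ≤ ∫⁻ _, K ∂μ := lintegral_mono key
        _ = K := by rw [lintegral_const, measure_univ, mul_one]
    exact ne_top_of_le_ne_top hKtop hle

end
end

section
/- Let K ⊆ ℙ^n be a compact set. Then the sequence of Chebyshev quantities (M_s(K))_{s≥1} converges in [0,+∞]; in particular liminf_{s→∞} M_s(K) = limsup_{s→∞} M_s(K). -/
open MeasureTheory Filter Topology ENNReal

noncomputable section

variable {n : ℕ}

/-- The Chebyshev quantity of order s,
M_s(K) = sup_{ζ₁,…,ζ_s ∈ K} inf_{ζ ∈ K} (1/s) Σ_j (−G(ζ,ζ_j)). -/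
def cheb (s : ℕ) (K : Set (Pn n)) : ℝ≥0∞ :=
  ⨆ (ζ : Fin s → Pn n) (_ : ∀ j, ζ j ∈ K),
    ⨅ (z : Pn n) (_ : z ∈ K), ((s : ℝ≥0∞))⁻¹ * ∑ j : Fin s, negG z (ζ j)

/-- Fekete-type lemma in `ℝ≥0∞` for superadditive sequences. -/
lemma fekete_ennreal (A : ℕ → ℝ≥0∞) (h0 : A 0 = 0)
    (hsuper : ∀ s t : ℕ, A s + A t ≤ A (s + t)) :
    Tendsto (fun s : ℕ => ((s : ℝ≥0∞))⁻¹ * A s) atTop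
      (𝓝 (⨆ m : ℕ, ((m : ℝ≥0∞))⁻¹ * A m)) := by
  set f : ℕ → ℝ≥0∞ := fun s => ((s : ℝ≥0∞))⁻¹ * A s with hf
  set L : ℝ≥0∞ := ⨆ m, f m with hL
  have hmul : ∀ q m : ℕ, (q : ℝ≥0∞) * A m ≤ A (q * m) := by
    intro q m
    induction q with
    | zero => simp [h0]
    | succ k ih =>
      have h1 : ((k + 1 : ℕ) : ℝ≥0∞) * A m = (k : ℝ≥0∞) * A m + A m := by
        push_cast; ring
      rw [h1]
      calc (k : ℝ≥0∞) * A m + A m ≤ A (k * m) + A m := add_le_add ih le_rfl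
        _ ≤ A (k * m + m) := hsuper _ _
        _ = A ((k + 1) * m) := by ring_nf
  -- main estimate: A s eventually dominates s * c for any c < f m
  have main : ∀ m : ℕ, 0 < m → ∀ c : ℝ≥0∞, c < f m →
      ∀ᶠ s : ℕ in atTop, (s : ℝ≥0∞) * c ≤ A s := by
    intro m hm c hc
    rcases eq_or_ne c 0 with rfl | hc0
    · simp
    obtain ⟨c', hcc', hc'⟩ := exists_between hc
    have hc'top : c' ≠ ∞ := hc'.ne_top
    have hctop : c ≠ ∞ := hcc'.ne_top
    have hAm : (m : ℝ≥0∞) * c' ≤ A m := by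
      have := mul_le_mul_right hc'.le (m : ℝ≥0∞)
      rwa [← mul_assoc, ENNReal.mul_inv_cancel (by exact_mod_cast hm.ne') (by simp),
        one_mul] at this
    -- A s ≥ ((s - m : ℕ)) * c'
    have hbig : ∀ s : ℕ, ((s - m : ℕ) : ℝ≥0∞) * c' ≤ A s := by
      intro s
      have h1 : ((s - m : ℕ) : ℝ≥0∞) ≤ ((s / m * m : ℕ) : ℝ≥0∞) := by
        have h2 : s ≤ s / m * m + m := by
          calc s = s / m * m + s % m := by rw [mul_comm]; exact (Nat.div_add_mod s m).symm
            _ ≤ s / m * m + m := Nat.add_le_add_left (Nat.mod_lt s hm).le _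
        exact_mod_cast Nat.cast_le.mpr (tsub_le_iff_right.mpr h2)
      calc ((s - m : ℕ) : ℝ≥0∞) * c' ≤ ((s / m : ℕ) : ℝ≥0∞) * ((m : ℝ≥0∞) * c') := by
            rw [← mul_assoc]
            exact mul_le_mul_left (by push_cast at h1 ⊢; exact_mod_cast h1) c'
        _ ≤ ((s / m : ℕ) : ℝ≥0∞) * A m := mul_le_mul_right hAm _
        _ ≤ A (s / m * m) := hmul _ _
        _ ≤ A (s / m * m) + A (s % m) := le_add_right le_rfl
        _ ≤ A (s / m * m + s % m) := hsuper _ _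
        _ = A s := by congr 1; rw [mul_comm]; exact Nat.div_add_mod s m
    -- eventually s * c ≤ (s - m) * c'
    set γ : ℝ := c.toReal with hγ
    set γ' : ℝ := c'.toReal with hγ'
    have hγpos : 0 < γ := ENNReal.toReal_pos hc0 hctop
    have hγγ' : γ < γ' := ENNReal.toReal_lt_toReal hctop hc'top |>.mpr hcc'
    have hev : ∀ᶠ s : ℕ in atTop, (s : ℝ) * γ ≤ ((s - m : ℕ) : ℝ) * γ' := by
      have htend : Tendsto (fun s : ℕ => ((s : ℝ) - m) * γ' - s * γ) atTop atTop := by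
        have : (fun s : ℕ => ((s : ℝ) - m) * γ' - s * γ)
            = fun s : ℕ => (s : ℝ) * (γ' - γ) - m * γ' := by
          funext s; ring
        rw [this]
        have h3 : Tendsto (fun s : ℕ => (s : ℝ) * (γ' - γ)) atTop atTop :=
          tendsto_natCast_atTop_atTop.atTop_mul_const (by linarith)
        simpa [sub_eq_add_neg] using tendsto_atTop_add_const_right atTop (-(m * γ')) h3
      filter_upwards [htend.eventually_ge_atTop 0, eventually_ge_atTop m] with s hs hsm
      have : ((s - m : ℕ) : ℝ) = (s : ℝ) - m := by
        push_cast [Nat.cast_sub hsm]; ring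
      rw [this]; linarith
    filter_upwards [hev] with s hs
    calc (s : ℝ≥0∞) * c = ENNReal.ofReal ((s : ℝ) * γ) := by
          rw [ENNReal.ofReal_mul (by positivity), ENNReal.ofReal_natCast,
            ENNReal.ofReal_toReal hctop]
      _ ≤ ENNReal.ofReal (((s - m : ℕ) : ℝ) * γ') := ENNReal.ofReal_le_ofReal hs
      _ = ((s - m : ℕ) : ℝ≥0∞) * c' := by
          rw [ENNReal.ofReal_mul (by positivity), ENNReal.ofReal_natCast,
            ENNReal.ofReal_toReal hc'top]
      _ ≤ A s := hbig s
  -- liminf bound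
  have key : ∀ m : ℕ, f m ≤ liminf f atTop := by
    intro m
    rcases Nat.eq_zero_or_pos m with hm | hm
    · subst hm; simp [hf, h0]
    refine le_of_forall_lt fun c hc => ?_
    obtain ⟨c', hcc', hc'⟩ := exists_between hc
    have : c' ≤ liminf f atTop := by
      refine le_liminf_of_le (by isBoundedDefault) ?_
      filter_upwards [main m hm c' hc', eventually_ge_atTop 1] with s hs hs1
      have hs0 : (s : ℝ≥0∞) ≠ 0 := by exact_mod_cast Nat.one_le_iff_ne_zero.mp hs1
      calc c' = (s : ℝ≥0∞)⁻¹ * ((s : ℝ≥0∞) * c') := by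
            rw [← mul_assoc, ENNReal.inv_mul_cancel hs0 (by simp), one_mul]
        _ ≤ (s : ℝ≥0∞)⁻¹ * A s := mul_le_mul_right hs _
    exact hcc'.trans_le this
  have hliminf : L ≤ liminf f atTop := iSup_le key
  have hlimsup : limsup f atTop ≤ L :=
    limsup_le_of_le (by isBoundedDefault) (Eventually.of_forall fun s => le_iSup f s)
  have h1 : liminf f atTop = L :=
    le_antisymm (le_trans (liminf_le_limsup) hlimsup) hliminf
  have h2 : limsup f atTop = L :=
    le_antisymm hlimsup (h1 ▸ liminf_le_limsup)
  exact tendsto_of_liminf_eq_limsup h1 h2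

variable (K : Set (Pn n))

def chebA (s : ℕ) (K : Set (Pn n)) : ℝ≥0∞ :=
  ⨆ (ζ : Fin s → Pn n) (_ : ∀ j, ζ j ∈ K),
    ⨅ (z : Pn n) (_ : z ∈ K), ∑ j : Fin s, negG z (ζ j)

lemma chebA_zero (hne : K.Nonempty) : chebA 0 K = 0 := by
  obtain ⟨z0, hz0⟩ := hne
  refine le_antisymm (iSup₂_le fun ζ hζ => ?_) (zero_le)
  exact le_trans (iInf₂_le z0 hz0) (by simp)

lemma chebA_super (hne : K.Nonempty) (s t : ℕ) : chebA s K + chebA t K ≤ chebA (s + t) K := by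
  obtain ⟨z0, hz0⟩ := hne
  refine ENNReal.biSup_add_biSup_le' (p := fun ζ : Fin s → Pn n => ∀ j, ζ j ∈ K)
    (q := fun η : Fin t → Pn n => ∀ j, η j ∈ K)
    ⟨fun _ => z0, fun _ => hz0⟩ ⟨fun _ => z0, fun _ => hz0⟩ ?_
  intro ζ hζ η hη
  have hmem : ∀ j, Fin.append ζ η j ∈ K := by
    intro j
    refine Fin.addCases (fun i => ?_) (fun i => ?_) j
    · rw [Fin.append_left]; exact hζ i
    · rw [Fin.append_right]; exact hη i
  refine le_trans ?_ (le_iSup₂ (f := fun ζ' (_ : ∀ j, ζ' j ∈ K) =>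
    ⨅ (z : Pn n) (_ : z ∈ K), ∑ j : Fin (s + t), negG z (ζ' j)) (Fin.append ζ η) hmem)
  refine le_iInf₂ fun z hz => ?_
  have hsum : ∑ j : Fin (s + t), negG z (Fin.append ζ η j)
      = ∑ j : Fin s, negG z (ζ j) + ∑ j : Fin t, negG z (η j) := by
    rw [Fin.sum_univ_add]
    simp [Fin.append_left, Fin.append_right]
  rw [hsum]
  exact add_le_add (iInf₂_le z hz) (iInf₂_le z hz)

lemma cheb_eq (s : ℕ) (hs : s ≠ 0) : cheb s K = ((s : ℝ≥0∞))⁻¹ * chebA s K := by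
  have h0 : ((s : ℝ≥0∞))⁻¹ ≠ 0 := by simp
  have htop : ((s : ℝ≥0∞))⁻¹ ≠ ∞ := by simp [hs]
  rw [cheb, chebA]
  simp_rw [ENNReal.mul_iSup, ENNReal.mul_iInf_of_ne h0 htop]

lemma cheb_empty (s : ℕ) (hs : s ≠ 0) : cheb s (∅ : Set (Pn n)) = 0 := by
  rw [cheb]
  have : ∀ ζ : Fin s → Pn n, ¬ (∀ j, ζ j ∈ (∅ : Set (Pn n))) := by
    intro ζ h
    exact absurd (h ⟨0, Nat.pos_of_ne_zero hs⟩) (Set.notMem_empty _)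
  refine le_antisymm (iSup_le fun ζ => ?_) (zero_le)
  rw [iSup_neg (this ζ)]
  exact bot_le


theorem statement17 (n : ℕ) (K : Set (Pn n)) (hK : IsCompact K) :
    (∃ L : ℝ≥0∞, Tendsto (fun s => cheb s K) atTop (𝓝 L)) ∧
    liminf (fun s => cheb s K) atTop = limsup (fun s => cheb s K) atTop := by
  rcases K.eq_empty_or_nonempty with rfl | hne
  · have hev : (fun s => cheb s (∅ : Set (Pn n))) =ᶠ[atTop] fun _ => 0 := by
      filter_upwards [eventually_ge_atTop 1] with s hs
      exact cheb_empty s (by omega)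
    have ht : Tendsto (fun s => cheb s (∅ : Set (Pn n))) atTop (𝓝 0) :=
      Tendsto.congr' hev.symm tendsto_const_nhds
    exact ⟨⟨0, ht⟩, ht.liminf_eq.trans ht.limsup_eq.symm⟩
  · have hfek := fekete_ennreal (fun s => chebA s K) (chebA_zero K hne) (chebA_super K hne)
    have hev : (fun s => cheb s K) =ᶠ[atTop] fun s => ((s : ℝ≥0∞))⁻¹ * chebA s K := by
      filter_upwards [eventually_ge_atTop 1] with s hs
      exact cheb_eq K s (by omega)
    have ht : Tendsto (fun s => cheb s K) atTop (𝓝 _) := Tendsto.congr' hev.symm hfek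
    exact ⟨⟨_, ht⟩, ht.liminf_eq.trans ht.limsup_eq.symm⟩


end
end
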